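/- arXiv:0804.3628 — 10 statements merged into one kernel-verified Lean document; each statement's English description precedes it below -/
import Mathlib

section
/- Let G be a strongly connected weighted digraph on n nodes with Laplacian L. Then rank(L) = n − 1. -/
open Matrix BigOperators

/-- The Laplacian of a strongly connected weighted digraph on `n`
nodes has rank `n - 1`. -/
theorem rank_laplacian_of_strongly_connected
    (n : ℕ) (A : Matrix (Fin n) (Fin n) ℝ)
    (hA : ∀ i j, 0 ≤ A i j) (hdiag : ∀ i, A i i = 0)
    (hSC : ∀ i j : Fin n, i ≠ j → Relation.TransGen (fun u v => 0 < A u v) i j)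
    (L : Matrix (Fin n) (Fin n) ℝ)
    (hL : ∀ i j, L i j = if i = j then ∑ k ∈ Finset.univ.erase i, A i k else -A i j) :
    L.rank = n - 1 := by
  rcases n with _ | m
  · have h := L.rank_le_card_height
    simp at h
    omega
  set V : Fin (m + 1) → ℝ := fun _ => (1 : ℝ) with hV
  have hVne : V ≠ 0 := by
    intro h
    have := congrFun h 0
    simp [hV] at this
  -- kernel is span of constant vector
  have hker : LinearMap.ker L.mulVecLin = Submodule.span ℝ {V} := by
    apply le_antisymm
    · intro x hx
      have hx' : L *ᵥ x = 0 := hx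
      have key : ∀ i, ∑ j ∈ Finset.univ.erase i, A i j * (x i - x j) = 0 := by
        intro i
        have h0 : ∑ j, L i j * x j = 0 := by
          have := congrFun hx' i
          simpa [Matrix.mulVec, dotProduct] using this
        calc ∑ j ∈ Finset.univ.erase i, A i j * (x i - x j)
            = (∑ j ∈ Finset.univ.erase i, A i j) * x i
              - ∑ j ∈ Finset.univ.erase i, A i j * x j := by
              rw [Finset.sum_mul, ← Finset.sum_sub_distrib]
              exact Finset.sum_congr rfl fun j _ => by ring
          _ = L i i * x i + ∑ j ∈ Finset.univ.erase i, L i j * x j := by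
              rw [hL i i, if_pos rfl]
              rw [Finset.sum_congr rfl (fun j hj => by
                rw [hL i j, if_neg (fun h => (Finset.mem_erase.mp hj).1 h.symm)] : 
                ∀ j ∈ Finset.univ.erase i, L i j * x j = -A i j * x j)]
              rw [Finset.sum_congr rfl fun j _ => (by ring : -A i j * x j = -(A i j * x j)),
                Finset.sum_neg_distrib]
              ring
          _ = ∑ j, L i j * x j := Finset.add_sum_erase _ (fun j => L i j * x j) (Finset.mem_univ i)
          _ = 0 := h0
      obtain ⟨i0, _, hi0⟩ := Finset.exists_max_image Finset.univ x ⟨0, Finset.mem_univ 0⟩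
      set M := x i0 with hM
      have step : ∀ u, x u = M → ∀ v, 0 < A u v → x v = M := by
        intro u hu v hAv
        have hvne : v ≠ u := by
          intro h
          rw [h, hdiag] at hAv
          exact lt_irrefl 0 hAv
        have hnn : ∀ j ∈ Finset.univ.erase u, 0 ≤ A u j * (x u - x j) := by
          intro j _
          exact mul_nonneg (hA u j) (by rw [hu]; linarith [hi0 j (Finset.mem_univ j)])
        have := (Finset.sum_eq_zero_iff_of_nonneg hnn).mp (key u) v
          (Finset.mem_erase.mpr ⟨hvne, Finset.mem_univ v⟩)
        rcases mul_eq_zero.mp this with h | h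
        · exact absurd h (ne_of_gt hAv)
        · rw [← hu]; linarith
      have reach : ∀ j, Relation.TransGen (fun u v => 0 < A u v) i0 j → x j = M := by
        intro j htg
        induction htg with
        | single h => exact step i0 rfl _ h
        | tail h' h ih => exact step _ ih _ h
      have hconst : ∀ j, x j = M := by
        intro j
        by_cases hj : j = i0
        · rw [hj]
        · exact reach j (hSC i0 j (Ne.symm hj))
      have hxV : x = M • V := by
        funext j; simp [hV, hconst j]
      rw [hxV]
      exact Submodule.smul_mem _ M (Submodule.mem_span_singleton_self V)
    · rw [Submodule.span_singleton_le_iff_mem]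
      show L *ᵥ V = 0
      funext i
      have hsum : ∑ j, L i j = 0 := by
        rw [← Finset.add_sum_erase _ _ (Finset.mem_univ i), hL i i, if_pos rfl]
        rw [Finset.sum_congr rfl (fun j hj => by
          rw [hL i j, if_neg (fun h => (Finset.mem_erase.mp hj).1 h.symm)] :
          ∀ j ∈ Finset.univ.erase i, L i j = -A i j)]
        simp
      simpa [Matrix.mulVec, dotProduct, hV] using hsum
  have hrn := LinearMap.finrank_range_add_finrank_ker L.mulVecLin
  rw [hker, finrank_span_singleton hVne] at hrn
  have hdim : Module.finrank ℝ (Fin (m + 1) → ℝ) = m + 1 := by simp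
  rw [hdim] at hrn
  rw [Matrix.rank]
  omega
end

section
/- Let G be a strongly connected weighted digraph on n nodes with Laplacian L. Then every nonzero (complex) eigenvalue of L has strictly positive real part. -/
open Matrix BigOperators

/-- Every nonzero complex eigenvalue of the Laplacian of a strongly
connected weighted digraph has strictly positive real part. -/
theorem eigenvalues_laplacian_pos_real_part
    (n : ℕ) (A : Matrix (Fin n) (Fin n) ℝ)
    (hA : ∀ i j, 0 ≤ A i j) (hdiag : ∀ i, A i i = 0)
    (hSC : ∀ i j : Fin n, i ≠ j → Relation.TransGen (fun u v => 0 < A u v) i j)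
    (L : Matrix (Fin n) (Fin n) ℝ)
    (hL : ∀ i j, L i j = if i = j then ∑ k ∈ Finset.univ.erase i, A i k else -A i j)
    (μ : ℂ) (hμ : μ ≠ 0)
    (heig : ∃ v : Fin n → ℂ, v ≠ 0 ∧ (L.map (Complex.ofReal ·)) *ᵥ v = μ • v) :
    0 < μ.re := by
  obtain ⟨v, hv0, hev⟩ := heig
  have hne : (Finset.univ : Finset (Fin n)).Nonempty := by
    rcases Nat.eq_zero_or_pos n with h | h
    · exact absurd (funext fun i => absurd i.2 (by omega)) hv0
    · exact ⟨⟨0, h⟩, Finset.mem_univ _⟩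
  obtain ⟨i, -, hmax⟩ := Finset.exists_max_image Finset.univ (fun j => ‖v j‖) hne
  have hvi : 0 < ‖v i‖ := by
    obtain ⟨j, hj⟩ := Function.ne_iff.mp hv0
    exact lt_of_lt_of_le (by simpa using hj) (hmax j (Finset.mem_univ j))
  set d : ℝ := ∑ k ∈ Finset.univ.erase i, A i k with hd_def
  have hd : 0 ≤ d := Finset.sum_nonneg fun k _ => hA i k
  have heq : ∑ j, (L i j : ℂ) * v j = μ * v i := by
    have := congrFun hev i
    simpa [Matrix.mulVec, Matrix.map_apply, dotProduct, Pi.smul_apply, smul_eq_mul] using this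
  have h1 : (μ - (d : ℂ)) * v i = -∑ j ∈ Finset.univ.erase i, (A i j : ℂ) * v j := by
    have hLd : L i i = d := by rw [hL, if_pos rfl]
    have hrest : ∑ j ∈ Finset.univ.erase i, (L i j : ℂ) * v j
        = -∑ j ∈ Finset.univ.erase i, (A i j : ℂ) * v j := by
      rw [← Finset.sum_neg_distrib]
      apply Finset.sum_congr rfl
      intro j hj
      have hji : i ≠ j := Ne.symm (Finset.mem_erase.mp hj).1
      rw [hL, if_neg hji]
      push_cast
      ring
    have hsplit := Finset.add_sum_erase Finset.univ (fun j => (L i j : ℂ) * v j) (Finset.mem_univ i)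
    rw [heq, hrest] at hsplit
    simp only [hLd] at hsplit
    linear_combination -hsplit
  have key : ‖μ - d‖ * ‖v i‖ ≤ d * ‖v i‖ := by
    calc ‖μ - d‖ * ‖v i‖
        = ‖(μ - d) * v i‖ := (norm_mul _ _).symm
      _ = ‖∑ j ∈ Finset.univ.erase i, (A i j : ℂ) * v j‖ := by rw [h1, norm_neg]
      _ ≤ ∑ j ∈ Finset.univ.erase i, ‖(A i j : ℂ) * v j‖ :=
          norm_sum_le _ _
      _ ≤ ∑ j ∈ Finset.univ.erase i, A i j * ‖v i‖ := by
          apply Finset.sum_le_sum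
          intro j _
          rw [norm_mul, Complex.norm_real, Real.norm_eq_abs, abs_of_nonneg (hA i j)]
          exact mul_le_mul_of_nonneg_left (hmax j (Finset.mem_univ j)) (hA i j)
      _ = d * ‖v i‖ := by rw [← Finset.sum_mul]
  have habs : ‖μ - d‖ ≤ d := le_of_mul_le_mul_right key hvi
  have h2 : ‖μ - d‖ ^ 2 ≤ d ^ 2 := pow_le_pow_left₀ (norm_nonneg _) habs 2
  rw [Complex.sq_norm, Complex.normSq_apply] at h2
  simp only [Complex.sub_re, Complex.sub_im, Complex.ofReal_re, Complex.ofReal_im, sub_zero] at h2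
  by_contra hcon
  push_neg at hcon
  have him : μ.im = 0 := by nlinarith [sq_nonneg μ.im, mul_nonneg hd (neg_nonneg.mpr hcon)]
  have hre : μ.re = 0 := by nlinarith [mul_nonneg hd (neg_nonneg.mpr hcon)]
  exact hμ (Complex.ext hre him)
end

section
/- Let L be the Laplacian of a strongly connected weighted digraph on n nodes, let ξ be its normalized positive left eigenvector for eigenvalue 0 (ξᵀL = 0, ξ_i > 0, ∑ξ_i = 1), and let Ξ = diag(ξ). Then the matrix B = (ΞL + LᵀΞ)/2 is symmetric, has zero row sums, and has nonpositive off-diagonal entries; that is, B is the graph Laplacian of a weighted undirected graph. -/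
open Matrix BigOperators

/-- With `Ξ = diag(ξ)`, the matrix `B = (ΞL + LᵀΞ)/2` is symmetric,
has zero row sums, and has nonpositive off-diagonal entries; i.e. it is the graph
Laplacian of a weighted undirected graph. -/
theorem symmetrized_laplacian_is_undirected_laplacian
    (n : ℕ) (A : Matrix (Fin n) (Fin n) ℝ)
    (hA : ∀ i j, 0 ≤ A i j) (hdiag : ∀ i, A i i = 0)
    (hSC : ∀ i j : Fin n, i ≠ j → Relation.TransGen (fun u v => 0 < A u v) i j)
    (L : Matrix (Fin n) (Fin n) ℝ)
    (hL : ∀ i j, L i j = if i = j then ∑ k ∈ Finset.univ.erase i, A i k else -A i j)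
    (ξ : Fin n → ℝ) (hξpos : ∀ i, 0 < ξ i) (hξsum : ∑ i, ξ i = 1)
    (hξ : ξ ᵥ* L = 0)
    (B : Matrix (Fin n) (Fin n) ℝ)
    (hB : B = ((2 : ℝ)⁻¹) • (Matrix.diagonal ξ * L + Lᵀ * Matrix.diagonal ξ)) :
    (∀ i j, B i j = B j i) ∧ (∀ i, ∑ j, B i j = 0) ∧ (∀ i j, i ≠ j → B i j ≤ 0) := by
  have hBentry : ∀ i j, B i j = (2 : ℝ)⁻¹ * (ξ i * L i j + L j i * ξ j) := by
    intro i j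
    simp [hB, Matrix.mul_apply, Matrix.diagonal, Finset.sum_ite_eq,
      Finset.sum_ite_eq', Matrix.transpose_apply, mul_add]
  have hrowL : ∀ i, ∑ j, L i j = 0 := by
    intro i
    rw [← Finset.add_sum_erase _ _ (Finset.mem_univ i), hL i i, if_pos rfl]
    rw [← Finset.sum_add_distrib]
    refine Finset.sum_eq_zero fun j hj => ?_
    rw [hL i j, if_neg (Finset.ne_of_mem_erase hj).symm]
    ring
  have hcolL : ∀ i, ∑ j, ξ j * L j i = 0 := by
    intro i
    have := congrFun hξ i
    simpa [Matrix.vecMul, dotProduct] using this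
  refine ⟨fun i j => by rw [hBentry, hBentry]; ring, fun i => ?_, fun i j hij => ?_⟩
  · simp only [hBentry]
    rw [← Finset.mul_sum]
    have : ∑ j, (ξ i * L i j + L j i * ξ j) = ξ i * ∑ j, L i j + ∑ j, ξ j * L j i := by
      rw [Finset.mul_sum, ← Finset.sum_add_distrib]
      exact Finset.sum_congr rfl fun j _ => by ring
    rw [this, hrowL, hcolL]; ring
  · rw [hBentry, hL i j, if_neg hij, hL j i, if_neg (Ne.symm hij)]
    have h1 := mul_nonneg (hξpos i).le (hA i j)
    have h2 := mul_nonneg (hA j i) (hξpos j).le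
    nlinarith
end

section
/- Let L be the Laplacian of a strongly connected weighted digraph on n nodes, let ξ be its normalized positive left eigenvector for eigenvalue 0 (ξᵀL = 0, ξ_i > 0, ∑ξ_i = 1), let Ξ = diag(ξ), and let B = (b_ij) = (ΞL + LᵀΞ)/2. Then for every vector y ∈ ℝⁿ, yᵀ Ξ L y = yᵀ B y = −∑_{i>j} b_ij (y_i − y_j)² ≥ 0; in particular the symmetrized matrix ΞL + LᵀΞ is positive semidefinite. -/
open Matrix BigOperators

lemma aux_pair_sum (n : ℕ) (g : Fin n → Fin n → ℝ) (hsymm : ∀ i j, g i j = g j i)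
    (hd : ∀ i, g i i = 0) :
    ∑ i, ∑ j, g i j = 2 * ∑ i, ∑ j ∈ Finset.univ.filter (fun j => j < i), g i j := by
  classical
  have hprod : ∑ i, ∑ j, g i j
      = ∑ p ∈ (Finset.univ ×ˢ Finset.univ : Finset (Fin n × Fin n)), g p.1 p.2 := by
    rw [Finset.sum_product]
  have hswap : ∑ p ∈ (Finset.univ ×ˢ Finset.univ : Finset (Fin n × Fin n)).filter
        (fun p => p.1 < p.2), g p.1 p.2
      = ∑ p ∈ (Finset.univ ×ˢ Finset.univ : Finset (Fin n × Fin n)).filter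
        (fun p => p.2 < p.1), g p.1 p.2 := by
    refine Finset.sum_nbij' (fun p => Prod.swap p) (fun p => Prod.swap p) ?_ ?_ ?_ ?_ ?_
    · intro p hp; simp at hp ⊢; exact hp
    · intro p hp; simp at hp ⊢; exact hp
    · intro p _; simp
    · intro p _; simp
    · intro p _; exact hsymm p.1 p.2
  have hdiagzero : ∑ p ∈ ((Finset.univ ×ˢ Finset.univ : Finset (Fin n × Fin n)).filter
        (fun p => ¬ p.2 < p.1)).filter (fun p => ¬ p.1 < p.2), g p.1 p.2 = 0 := by
    refine Finset.sum_eq_zero ?_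
    intro p hp
    simp only [Finset.mem_filter] at hp
    have : p.1 = p.2 := le_antisymm (not_lt.mp hp.1.2) (not_lt.mp hp.2)
    rw [this]; exact hd p.2
  have hsplit := Finset.sum_filter_add_sum_filter_not
    ((Finset.univ ×ˢ Finset.univ : Finset (Fin n × Fin n)))
    (fun p => p.2 < p.1) (fun p => g p.1 p.2)
  have hsplit2 := Finset.sum_filter_add_sum_filter_not
    ((Finset.univ ×ˢ Finset.univ : Finset (Fin n × Fin n)).filter (fun p => ¬ p.2 < p.1))
    (fun p => p.1 < p.2) (fun p => g p.1 p.2)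
  have hff : ((Finset.univ ×ˢ Finset.univ : Finset (Fin n × Fin n)).filter
        (fun p => ¬ p.2 < p.1)).filter (fun p => p.1 < p.2)
      = (Finset.univ ×ˢ Finset.univ : Finset (Fin n × Fin n)).filter (fun p => p.1 < p.2) := by
    ext p; simp only [Finset.mem_filter]
    constructor
    · rintro ⟨⟨h1, _⟩, h3⟩; exact ⟨h1, h3⟩
    · rintro ⟨h1, h3⟩; exact ⟨⟨h1, asymm h3⟩, h3⟩
  have hnest : ∑ p ∈ (Finset.univ ×ˢ Finset.univ : Finset (Fin n × Fin n)).filter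
        (fun p => p.2 < p.1), g p.1 p.2
      = ∑ i, ∑ j ∈ Finset.univ.filter (fun j => j < i), g i j := by
    rw [Finset.sum_filter, Finset.sum_product]
    simp [Finset.sum_filter]
  rw [hprod, ← hsplit, hnest, ← hsplit2, hff, hswap, hnest, hdiagzero]
  ring

/-- With `Ξ = diag(ξ)` and `B = (ΞL + LᵀΞ)/2`, for every `y ∈ ℝⁿ`
one has `yᵀΞLy = yᵀBy = -∑_{i>j} b_ij (y_i - y_j)² ≥ 0`; in particular
`ΞL + LᵀΞ` is positive semidefinite. -/
theorem symmetrized_laplacian_quadratic_form_nonneg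
    (n : ℕ) (A : Matrix (Fin n) (Fin n) ℝ)
    (hA : ∀ i j, 0 ≤ A i j) (hdiag : ∀ i, A i i = 0)
    (hSC : ∀ i j : Fin n, i ≠ j → Relation.TransGen (fun u v => 0 < A u v) i j)
    (L : Matrix (Fin n) (Fin n) ℝ)
    (hL : ∀ i j, L i j = if i = j then ∑ k ∈ Finset.univ.erase i, A i k else -A i j)
    (ξ : Fin n → ℝ) (hξpos : ∀ i, 0 < ξ i) (hξsum : ∑ i, ξ i = 1)
    (hξ : ξ ᵥ* L = 0)
    (B : Matrix (Fin n) (Fin n) ℝ)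
    (hB : B = ((2 : ℝ)⁻¹) • (Matrix.diagonal ξ * L + Lᵀ * Matrix.diagonal ξ)) :
    (∀ y : Fin n → ℝ,
      y ⬝ᵥ ((Matrix.diagonal ξ * L) *ᵥ y) = y ⬝ᵥ (B *ᵥ y) ∧
      y ⬝ᵥ (B *ᵥ y) =
        -∑ i, ∑ j ∈ Finset.univ.filter (fun j => j < i), B i j * (y i - y j) ^ 2 ∧
      0 ≤ y ⬝ᵥ (B *ᵥ y)) ∧
    (Matrix.diagonal ξ * L + Lᵀ * Matrix.diagonal ξ).PosSemidef := by
  classical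
  have hBij : ∀ i j, B i j = (2:ℝ)⁻¹ * (ξ i * L i j + L j i * ξ j) := by
    intro i j
    rw [hB]
    simp [Matrix.add_apply, Matrix.diagonal_mul, Matrix.mul_diagonal, Matrix.transpose_apply]
  have hBsymm : ∀ i j, B i j = B j i := by
    intro i j; rw [hBij, hBij]; ring
  have hrowL : ∀ i, ∑ j, L i j = 0 := by
    intro i
    have h := Finset.add_sum_erase Finset.univ (fun j => L i j) (Finset.mem_univ i)
    rw [← h]
    rw [hL i i, if_pos rfl]
    have h2 : ∑ j ∈ Finset.univ.erase i, L i j = -∑ j ∈ Finset.univ.erase i, A i j := by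
      rw [← Finset.sum_neg_distrib]
      refine Finset.sum_congr rfl fun j hj => ?_
      rw [hL i j, if_neg (Ne.symm (Finset.ne_of_mem_erase hj))]
    rw [h2]; ring
  have hcolL : ∀ j, ∑ i, ξ i * L i j = 0 := by
    intro j
    have h := congrFun hξ j
    simpa [Matrix.vecMul, dotProduct] using h
  have hBrow : ∀ i, ∑ j, B i j = 0 := by
    intro i
    have h : ∑ j, B i j
        = (2:ℝ)⁻¹ * (ξ i * ∑ j, L i j) + (2:ℝ)⁻¹ * (∑ j, ξ j * L j i) := by
      rw [Finset.mul_sum, Finset.mul_sum, Finset.mul_sum, ← Finset.sum_add_distrib]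
      refine Finset.sum_congr rfl fun j _ => ?_
      rw [hBij]; ring
    rw [h, hrowL i, hcolL i]; ring
  have hBoff : ∀ i j, i ≠ j → B i j ≤ 0 := by
    intro i j hij
    rw [hBij, hL i j, hL j i, if_neg hij, if_neg (Ne.symm hij)]
    nlinarith [mul_nonneg (hξpos i).le (hA i j), mul_nonneg (hξpos j).le (hA j i)]
  have main : ∀ y : Fin n → ℝ,
      y ⬝ᵥ ((Matrix.diagonal ξ * L) *ᵥ y) = y ⬝ᵥ (B *ᵥ y) ∧
      y ⬝ᵥ (B *ᵥ y) =
        -∑ i, ∑ j ∈ Finset.univ.filter (fun j => j < i), B i j * (y i - y j) ^ 2 ∧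
      0 ≤ y ⬝ᵥ (B *ᵥ y) := by
    intro y
    have hq : y ⬝ᵥ (B *ᵥ y) = ∑ i, ∑ j, B i j * y i * y j := by
      simp only [Matrix.mulVec, dotProduct, Finset.mul_sum]
      exact Finset.sum_congr rfl fun i _ => Finset.sum_congr rfl fun j _ => by ring
    have hx : y ⬝ᵥ ((Matrix.diagonal ξ * L) *ᵥ y) = ∑ i, ∑ j, ξ i * L i j * y i * y j := by
      simp only [Matrix.mulVec, dotProduct, Finset.mul_sum, Matrix.diagonal_mul]
      exact Finset.sum_congr rfl fun i _ => Finset.sum_congr rfl fun j _ => by ring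
    have hswap : ∑ i, ∑ j, L j i * ξ j * y i * y j = ∑ i, ∑ j, ξ i * L i j * y i * y j := by
      rw [Finset.sum_comm]
      exact Finset.sum_congr rfl fun a _ => Finset.sum_congr rfl fun b _ => by ring
    have h1 : y ⬝ᵥ ((Matrix.diagonal ξ * L) *ᵥ y) = y ⬝ᵥ (B *ᵥ y) := by
      rw [hq, hx]
      have h2 : ∑ i, ∑ j, B i j * y i * y j
          = (2:ℝ)⁻¹ * (∑ i, ∑ j, ξ i * L i j * y i * y j)
            + (2:ℝ)⁻¹ * (∑ i, ∑ j, L j i * ξ j * y i * y j) := by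
        rw [Finset.mul_sum, Finset.mul_sum, ← Finset.sum_add_distrib]
        refine Finset.sum_congr rfl fun i _ => ?_
        rw [Finset.mul_sum, Finset.mul_sum, ← Finset.sum_add_distrib]
        refine Finset.sum_congr rfl fun j _ => ?_
        rw [hBij]; ring
      rw [h2, hswap]; ring
    have hzero1 : ∑ i, ∑ j, B i j * (y i) ^ 2 = 0 := by
      refine Finset.sum_eq_zero fun i _ => ?_
      rw [← Finset.sum_mul, hBrow i, zero_mul]
    have hzero2 : ∑ i, ∑ j, B i j * (y j) ^ 2 = 0 := by
      rw [Finset.sum_comm]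
      refine Finset.sum_eq_zero fun j _ => ?_
      rw [← Finset.sum_mul]
      have : ∑ i, B i j = 0 := by
        rw [Finset.sum_congr rfl fun i _ => hBsymm i j]; exact hBrow j
      rw [this, zero_mul]
    have key : ∑ i, ∑ j, B i j * (y i - y j) ^ 2
        = (∑ i, ∑ j, B i j * (y i) ^ 2) - 2 * (∑ i, ∑ j, B i j * y i * y j)
          + (∑ i, ∑ j, B i j * (y j) ^ 2) := by
      rw [Finset.mul_sum, ← Finset.sum_sub_distrib, ← Finset.sum_add_distrib]
      refine Finset.sum_congr rfl fun i _ => ?_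
      rw [Finset.mul_sum, ← Finset.sum_sub_distrib, ← Finset.sum_add_distrib]
      exact Finset.sum_congr rfl fun j _ => by ring
    have hpair := aux_pair_sum n (fun i j => B i j * (y i - y j) ^ 2)
      (fun i j => by rw [hBsymm i j]; ring) (fun i => by ring)
    have h2 : y ⬝ᵥ (B *ᵥ y) =
        -∑ i, ∑ j ∈ Finset.univ.filter (fun j => j < i), B i j * (y i - y j) ^ 2 := by
      rw [hq]
      have := key
      rw [hzero1, hzero2, hpair] at this
      linarith
    refine ⟨h1, h2, ?_⟩
    rw [h2]
    have hT : ∑ i, ∑ j ∈ Finset.univ.filter (fun j => j < i), B i j * (y i - y j) ^ 2 ≤ 0 := by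
      refine Finset.sum_nonpos fun i _ => Finset.sum_nonpos fun j hj => ?_
      have hij : i ≠ j := (ne_of_lt (Finset.mem_filter.mp hj).2).symm
      exact mul_nonpos_of_nonpos_of_nonneg (hBoff i j hij) (sq_nonneg _)
    linarith
  refine ⟨main, ?_⟩
  have hM : Matrix.diagonal ξ * L + Lᵀ * Matrix.diagonal ξ = (2:ℝ) • B := by
    rw [hB, smul_smul]; norm_num
  refine Matrix.PosSemidef.of_dotProduct_mulVec_nonneg ?_ ?_
  · -- IsHermitian
    show _ᴴ = _
    ext i j
    simp only [Matrix.conjTranspose_apply, star_trivial, Matrix.add_apply,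
      Matrix.diagonal_mul, Matrix.mul_diagonal, Matrix.transpose_apply]
    ring
  · intro x
    rw [hM]
    have hx := (main x).2.2
    simp only [Matrix.smul_mulVec, dotProduct_smul, star_trivial, smul_eq_mul]
    positivity
end

section
/- Consider the nonlinear consensus protocol ẋ_i(t) = −∑_{j=1}^n l_ij h(x_j(t)), i = 1, …, n, on a strongly connected weighted digraph with Laplacian L, where h : ℝ → ℝ is continuous, strictly increasing, and h(0) = 0. Let ξ be the normalized positive left eigenvector of L for eigenvalue 0, and define V(x) = ∑_{i=1}^n ξ_i ∫_0^{x_i} h(s) ds. Then along every solution x(t), t ↦ V(x(t)) is nonincreasing: its derivative satisfies d/dt V(x(t)) = ∑_{i>j} b_ij (h(x_i(t)) − h(x_j(t)))² ≤ 0, where B = (b_ij) = (ΞL + LᵀΞ)/2 and Ξ = diag(ξ). In particular V(x(t)) ≤ V(x(0)) and the solution x(t) remains bounded for all t ≥ 0. -/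
open Matrix BigOperators


/-- The integral of a monotone function vanishing at 0 is nonnegative. -/
lemma aux_H_nonneg (h : ℝ → ℝ) (hcont : Continuous h) (hmono : StrictMono h)
    (h0 : h 0 = 0) (u : ℝ) : 0 ≤ ∫ s in (0:ℝ)..u, h s := by
  rcases le_or_gt 0 u with hu | hu
  · exact intervalIntegral.integral_nonneg hu (fun s hs => by
      rw [← h0]; exact hmono.monotone hs.1)
  · rw [intervalIntegral.integral_symm]
    have hle : (∫ s in u..(0:ℝ), h s) ≤ 0 := by
      have := intervalIntegral.integral_mono_on (μ := MeasureTheory.volume)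
        (f := h) (g := fun _ => (0:ℝ)) hu.le (hcont.intervalIntegrable _ _)
        intervalIntegrable_const
        (fun s hs => by rw [← h0]; exact hmono.monotone hs.2)
      simpa using this
    linarith

lemma aux_H_coercive (h : ℝ → ℝ) (hcont : Continuous h) (hmono : StrictMono h)
    (h0 : h 0 = 0) (c u : ℝ) (hc : 0 ≤ c) (hu : (∫ s in (0:ℝ)..u, h s) ≤ c) :
    |u| ≤ 1 + c * ((h 1)⁻¹ + (-h (-1))⁻¹) := by
  have h1pos : 0 < h 1 := by rw [← h0]; exact hmono one_pos
  have hm1neg : 0 < -h (-1) := by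
    have : h (-1) < h 0 := hmono (by norm_num)
    rw [h0] at this; linarith
  have hterm1 : 0 ≤ c * (h 1)⁻¹ := mul_nonneg hc (inv_nonneg.2 h1pos.le)
  have hterm2 : 0 ≤ c * (-h (-1))⁻¹ := mul_nonneg hc (inv_nonneg.2 hm1neg.le)
  have hexp : c * ((h 1)⁻¹ + (-h (-1))⁻¹) = c * (h 1)⁻¹ + c * (-h (-1))⁻¹ := by ring
  rcases le_or_gt u 1 with hu1 | hu1
  · rcases le_or_gt (-1) u with hum | hum
    · rw [abs_le]; constructor <;> linarith
    · -- u < -1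
      have hsym : (∫ s in (0:ℝ)..u, h s) = -∫ s in u..(0:ℝ), h s :=
        intervalIntegral.integral_symm _ _
      have hsplit : (∫ s in u..(-1:ℝ), h s) + (∫ s in (-1:ℝ)..(0:ℝ), h s)
          = ∫ s in u..(0:ℝ), h s :=
        intervalIntegral.integral_add_adjacent_intervals
          (hcont.intervalIntegrable _ _) (hcont.intervalIntegrable _ _)
      have hpart1 : (∫ s in u..(-1:ℝ), h s) ≤ (-1 - u) * h (-1) := by
        have := intervalIntegral.integral_mono_on (μ := MeasureTheory.volume)
          (f := h) (g := fun _ => h (-1)) hum.le (hcont.intervalIntegrable _ _)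
          intervalIntegrable_const (fun s hs => hmono.monotone hs.2)
        simpa [smul_eq_mul, mul_comm] using this
      have hpart2 : (∫ s in (-1:ℝ)..(0:ℝ), h s) ≤ 0 := by
        have := intervalIntegral.integral_mono_on (μ := MeasureTheory.volume)
          (f := h) (g := fun _ => (0:ℝ)) (by norm_num : (-1:ℝ) ≤ 0)
          (hcont.intervalIntegrable _ _) intervalIntegrable_const
          (fun s hs => by rw [← h0]; exact hmono.monotone hs.2)
        simpa using this
      have key : (-1 - u) * (-h (-1)) ≤ c := by nlinarith
      have h2 : -1 - u ≤ c * (-h (-1))⁻¹ := by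
        rw [← div_eq_mul_inv, le_div_iff₀ hm1neg]; exact key
      rw [abs_of_neg (by linarith : u < 0)]
      linarith
  · -- 1 < u
    have hsplit : (∫ s in (0:ℝ)..(1:ℝ), h s) + (∫ s in (1:ℝ)..u, h s)
        = ∫ s in (0:ℝ)..u, h s :=
      intervalIntegral.integral_add_adjacent_intervals
        (hcont.intervalIntegrable _ _) (hcont.intervalIntegrable _ _)
    have hpart1 : 0 ≤ ∫ s in (0:ℝ)..(1:ℝ), h s :=
      intervalIntegral.integral_nonneg (by norm_num)
        (fun s hs => by rw [← h0]; exact hmono.monotone hs.1)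
    have hpart2 : (u - 1) * h 1 ≤ ∫ s in (1:ℝ)..u, h s := by
      have := intervalIntegral.integral_mono_on (μ := MeasureTheory.volume)
        (f := fun _ => h 1) (g := h) hu1.le intervalIntegrable_const
        (hcont.intervalIntegrable _ _) (fun s hs => hmono.monotone hs.1)
      simpa [smul_eq_mul, mul_comm] using this
    have key : (u - 1) * h 1 ≤ c := by linarith
    have h2 : u - 1 ≤ c * (h 1)⁻¹ := by
      rw [← div_eq_mul_inv, le_div_iff₀ h1pos]; exact key
    rw [abs_of_pos (by linarith : 0 < u)]
    linarith

/-- Key quadratic-form identity. -/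
lemma aux_quad_key (n : ℕ) (ξ : Fin n → ℝ) (L B : Matrix (Fin n) (Fin n) ℝ)
    (hBval : ∀ i j, B i j = 2⁻¹ * (ξ i * L i j + L j i * ξ j))
    (hLrow : ∀ i, ∑ j, L i j = 0) (hLcol : ∀ j, ∑ i, ξ i * L i j = 0)
    (y : Fin n → ℝ) :
    ∑ i, ξ i * (y i * (-∑ j, L i j * y j)) =
      ∑ i, ∑ j ∈ Finset.univ.filter (fun j => j < i), B i j * (y i - y j) ^ 2 := by
  classical
  set S : ℝ := ∑ i, ∑ j, B i j * (y i * y j) with hSdef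
  set T : ℝ := ∑ i, ∑ j, ξ i * L i j * (y i * y j) with hTdef
  have hBrow : ∀ i, ∑ j, B i j = 0 := by
    intro i
    have e : ∑ j, B i j = (2⁻¹ * ξ i) * (∑ j, L i j) + 2⁻¹ * (∑ j, ξ j * L j i) := by
      rw [Finset.mul_sum, Finset.mul_sum, ← Finset.sum_add_distrib]
      exact Finset.sum_congr rfl (fun j _ => by rw [hBval]; ring)
    rw [e, hLrow i, hLcol i]; ring
  have hBcol : ∀ j, ∑ i, B i j = 0 := by
    intro j
    have e : ∑ i, B i j = 2⁻¹ * (∑ i, ξ i * L i j) + (2⁻¹ * ξ j) * (∑ i, L j i) := by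
      rw [Finset.mul_sum, Finset.mul_sum, ← Finset.sum_add_distrib]
      exact Finset.sum_congr rfl (fun i _ => by rw [hBval]; ring)
    rw [e, hLrow j, hLcol j]; ring
  have hBsym : ∀ i j, B i j = B j i := fun i j => by rw [hBval, hBval]; ring
  -- S = T
  have hST : S = T := by
    have h1 : ∑ i, ∑ j, (L j i * ξ j) * (y i * y j) = T := by
      rw [Finset.sum_comm, hTdef]
      exact Finset.sum_congr rfl fun a _ => Finset.sum_congr rfl fun b _ => by ring
    have h2 : S = 2⁻¹ * T + 2⁻¹ * (∑ i, ∑ j, (L j i * ξ j) * (y i * y j)) := by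
      rw [hSdef, hTdef, Finset.mul_sum, Finset.mul_sum, ← Finset.sum_add_distrib]
      refine Finset.sum_congr rfl fun i _ => ?_
      rw [Finset.mul_sum, Finset.mul_sum, ← Finset.sum_add_distrib]
      exact Finset.sum_congr rfl fun j _ => by rw [hBval]; ring
    rw [h2, h1]; ring
  -- LHS = -T
  have hLHS : ∑ i, ξ i * (y i * (-∑ j, L i j * y j)) = -T := by
    calc ∑ i, ξ i * (y i * (-∑ j, L i j * y j))
        = ∑ i, -(∑ j, ξ i * L i j * (y i * y j)) := by
          refine Finset.sum_congr rfl fun i _ => ?_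
          calc ξ i * (y i * (-∑ j, L i j * y j))
              = -((ξ i * y i) * ∑ j, L i j * y j) := by ring
            _ = -(∑ j, (ξ i * y i) * (L i j * y j)) := by rw [Finset.mul_sum]
            _ = -(∑ j, ξ i * L i j * (y i * y j)) := by
                congr 1
                exact Finset.sum_congr rfl fun j _ => by ring
      _ = -T := by rw [hTdef, Finset.sum_neg_distrib]
  -- F = -(2S)
  set F : ℝ := ∑ i, ∑ j, B i j * (y i - y j) ^ 2 with hFdef
  have hF : F = -(2 * S) := by
    have key : F + 2 * S = 0 := by
      have e1 : F + 2 * S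
          = ∑ i, ∑ j, (B i j * (y i) ^ 2 + B i j * (y j) ^ 2) := by
        rw [hFdef, hSdef, Finset.mul_sum, ← Finset.sum_add_distrib]
        refine Finset.sum_congr rfl fun i _ => ?_
        rw [Finset.mul_sum, ← Finset.sum_add_distrib]
        exact Finset.sum_congr rfl fun j _ => by ring
      have e2 : ∑ i, ∑ j, B i j * (y i) ^ 2 = 0 := by
        refine Finset.sum_eq_zero fun i _ => ?_
        rw [← Finset.sum_mul, hBrow i, zero_mul]
      have e3 : ∑ i, ∑ j, B i j * (y j) ^ 2 = 0 := by
        rw [Finset.sum_comm]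
        refine Finset.sum_eq_zero fun j _ => ?_
        rw [← Finset.sum_mul, hBcol j, zero_mul]
      have e4 : ∑ i, ∑ j, (B i j * (y i) ^ 2 + B i j * (y j) ^ 2)
          = (∑ i, ∑ j, B i j * (y i) ^ 2) + ∑ i, ∑ j, B i j * (y j) ^ 2 := by
        rw [← Finset.sum_add_distrib]
        exact Finset.sum_congr rfl fun i _ => by rw [← Finset.sum_add_distrib]
      rw [e1, e4, e2, e3, add_zero]
    linarith
  -- RHS = -S
  set R : ℝ := ∑ i, ∑ j ∈ Finset.univ.filter (fun j => j < i), B i j * (y i - y j) ^ 2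
    with hRdef
  have hRite : R = ∑ i, ∑ j, if j < i then B i j * (y i - y j) ^ 2 else 0 := by
    rw [hRdef]
    exact Finset.sum_congr rfl fun i _ => (Finset.sum_filter _ _)
  have hRswap : (∑ i, ∑ j, if j < i then B i j * (y i - y j) ^ 2 else 0)
      = ∑ i, ∑ j, if i < j then B i j * (y i - y j) ^ 2 else 0 := by
    rw [Finset.sum_comm]
    refine Finset.sum_congr rfl fun a _ => Finset.sum_congr rfl fun b _ => ?_
    by_cases hab : a < b
    · simp only [if_pos hab]
      rw [hBsym b a]; ring_nf
    · simp only [if_neg hab]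
  have h2R : 2 * R = F := by
    have hRR : R + R = F := by
      rw [hRite]
      nth_rewrite 2 [hRswap]
      rw [hFdef, ← Finset.sum_add_distrib]
      refine Finset.sum_congr rfl fun i _ => ?_
      rw [← Finset.sum_add_distrib]
      refine Finset.sum_congr rfl fun j _ => ?_
      rcases lt_trichotomy i j with hij | hij | hij
      · rw [if_neg (asymm hij), if_pos hij, zero_add]
      · subst hij
        simp
      · rw [if_pos hij, if_neg (asymm hij), add_zero]
    linarith
  have hR : R = -S := by
    have := hF
    rw [← h2R] at this
    linarith
  rw [hLHS, hR, hST]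

/-- Along every solution of the nonlinear protocol, the Lyapunov
function `V(x) = ∑ i, ξ_i ∫_0^{x_i} h(s) ds` has derivative
`∑_{i>j} b_ij (h(x_i) - h(x_j))² ≤ 0`, where `B = (ΞL + LᵀΞ)/2`; in particular
`V(x(t)) ≤ V(x(0))` and the solution remains bounded for `t ≥ 0`. -/
theorem lyapunov_decreasing_along_solutions
    (n : ℕ) (A : Matrix (Fin n) (Fin n) ℝ)
    (hA : ∀ i j, 0 ≤ A i j) (hdiag : ∀ i, A i i = 0)
    (hSC : ∀ i j : Fin n, i ≠ j → Relation.TransGen (fun u v => 0 < A u v) i j)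
    (L : Matrix (Fin n) (Fin n) ℝ)
    (hL : ∀ i j, L i j = if i = j then ∑ k ∈ Finset.univ.erase i, A i k else -A i j)
    (ξ : Fin n → ℝ) (hξpos : ∀ i, 0 < ξ i) (hξsum : ∑ i, ξ i = 1)
    (hξ : ξ ᵥ* L = 0)
    (B : Matrix (Fin n) (Fin n) ℝ)
    (hB : B = ((2 : ℝ)⁻¹) • (Matrix.diagonal ξ * L + Lᵀ * Matrix.diagonal ξ))
    (h : ℝ → ℝ) (hcont : Continuous h) (hmono : StrictMono h) (h0 : h 0 = 0)
    (V : (Fin n → ℝ) → ℝ)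
    (hV : ∀ y : Fin n → ℝ, V y = ∑ i, ξ i * ∫ s in (0 : ℝ)..(y i), h s)
    (x : ℝ → Fin n → ℝ)
    (hode : ∀ i, ∀ t ∈ Set.Ici (0 : ℝ),
      HasDerivWithinAt (fun s => x s i) (-∑ j, L i j * h (x t j)) (Set.Ici (0 : ℝ)) t) :
    (∀ t ∈ Set.Ici (0 : ℝ),
      HasDerivWithinAt (fun s => V (x s))
        (∑ i, ∑ j ∈ Finset.univ.filter (fun j => j < i),
          B i j * (h (x t i) - h (x t j)) ^ 2) (Set.Ici (0 : ℝ)) t ∧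
      (∑ i, ∑ j ∈ Finset.univ.filter (fun j => j < i),
          B i j * (h (x t i) - h (x t j)) ^ 2) ≤ 0) ∧
    (∀ t ∈ Set.Ici (0 : ℝ), V (x t) ≤ V (x 0)) ∧
    (∃ M : ℝ, ∀ t ∈ Set.Ici (0 : ℝ), ‖x t‖ ≤ M) := by
  classical
  -- entrywise formula for B
  have hBval : ∀ i j, B i j = 2⁻¹ * (ξ i * L i j + L j i * ξ j) := by
    intro i j
    rw [hB]
    simp only [Matrix.smul_apply, Matrix.add_apply, Matrix.diagonal_mul,
      Matrix.mul_diagonal, Matrix.transpose_apply, smul_eq_mul]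
  -- row sums of L vanish
  have hLrow : ∀ i, ∑ j, L i j = 0 := by
    intro i
    rw [← Finset.add_sum_erase Finset.univ (fun j => L i j) (Finset.mem_univ i),
      hL i i, if_pos rfl]
    have e : ∑ j ∈ Finset.univ.erase i, L i j
        = ∑ j ∈ Finset.univ.erase i, -A i j :=
      Finset.sum_congr rfl fun j hj => by
        rw [hL, if_neg (Ne.symm (Finset.mem_erase.1 hj).1)]
    rw [e, Finset.sum_neg_distrib]
    exact add_neg_cancel _
  -- weighted column sums of L vanish
  have hLcol : ∀ j, ∑ i, ξ i * L i j = 0 := by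
    intro j
    have := congrFun hξ j
    simpa [Matrix.vecMul, dotProduct] using this
  -- derivative with the explicit quadratic value
  have hderiv : ∀ t ∈ Set.Ici (0 : ℝ),
      HasDerivWithinAt (fun s => V (x s))
        (∑ i, ∑ j ∈ Finset.univ.filter (fun j => j < i),
          B i j * (h (x t i) - h (x t j)) ^ 2) (Set.Ici (0 : ℝ)) t := by
    intro t ht
    have hsum : HasDerivWithinAt (fun s => ∑ i, ξ i * ∫ u in (0:ℝ)..(x s i), h u)
        (∑ i, ξ i * (h (x t i) * (-∑ j, L i j * h (x t j)))) (Set.Ici 0) t := by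
      apply HasDerivWithinAt.fun_sum
      intro i _
      have hH : HasDerivAt (fun u => ∫ s in (0:ℝ)..u, h s) (h (x t i)) (x t i) :=
        intervalIntegral.integral_hasDerivAt_right (hcont.intervalIntegrable _ _)
          hcont.stronglyMeasurable.stronglyMeasurableAtFilter hcont.continuousAt
      exact (hH.comp_hasDerivWithinAt t (hode i t ht)).const_mul (ξ i)
    have hkey := aux_quad_key n ξ L B hBval hLrow hLcol (fun j => h (x t j))
    rw [hkey] at hsum
    exact hsum.congr (fun s _ => hV (x s)) (hV (x t))
  -- nonpositivity of the derivative
  have hBneg : ∀ i j : Fin n, i ≠ j → B i j ≤ 0 := by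
    intro i j hij
    rw [hBval, hL i j, if_neg hij, hL j i, if_neg (Ne.symm hij)]
    nlinarith [hA i j, hA j i, (hξpos i).le, (hξpos j).le]
  have hDnonpos : ∀ t : ℝ,
      (∑ i, ∑ j ∈ Finset.univ.filter (fun j => j < i),
        B i j * (h (x t i) - h (x t j)) ^ 2) ≤ 0 := by
    intro t
    refine Finset.sum_nonpos fun i _ => Finset.sum_nonpos fun j hj => ?_
    have hji : j < i := (Finset.mem_filter.1 hj).2
    have := hBneg i j hji.ne'
    nlinarith [sq_nonneg (h (x t i) - h (x t j))]
  -- V (x t) ≤ V (x 0)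
  have hant : AntitoneOn (fun s => V (x s)) (Set.Ici 0) := by
    apply antitoneOn_of_deriv_nonpos (convex_Ici 0)
    · intro t ht
      exact (hderiv t ht).continuousWithinAt
    · rw [interior_Ici]
      intro t ht
      exact ((hderiv t (Set.mem_Ici.2 (le_of_lt (Set.mem_Ioi.1 ht)))).hasDerivAt
        (Ici_mem_nhds ht)).differentiableAt.differentiableWithinAt
    · rw [interior_Ici]
      intro t ht
      rw [((hderiv t (Set.mem_Ici.2 (le_of_lt (Set.mem_Ioi.1 ht)))).hasDerivAt (Ici_mem_nhds ht)).deriv]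
      exact hDnonpos t
  have hmonot : ∀ t ∈ Set.Ici (0 : ℝ), V (x t) ≤ V (x 0) := fun t ht =>
    hant (Set.self_mem_Ici) ht ht
  refine ⟨fun t ht => ⟨hderiv t ht, hDnonpos t⟩, hmonot, ?_⟩
  -- boundedness
  set c : ℝ := V (x 0) with hcdef
  have hc0 : 0 ≤ c := by
    rw [hcdef, hV]
    exact Finset.sum_nonneg fun i _ =>
      mul_nonneg (hξpos i).le (aux_H_nonneg h hcont hmono h0 _)
  set K : Fin n → ℝ := fun i => 1 + (c / ξ i) * ((h 1)⁻¹ + (-h (-1))⁻¹) with hKdef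
  have h1pos : 0 < h 1 := by rw [← h0]; exact hmono one_pos
  have hm1neg : 0 < -h (-1) := by
    have : h (-1) < h 0 := hmono (by norm_num)
    rw [h0] at this; linarith
  have hKnn : ∀ i, 0 ≤ K i := by
    intro i
    have : 0 ≤ (c / ξ i) * ((h 1)⁻¹ + (-h (-1))⁻¹) :=
      mul_nonneg (div_nonneg hc0 (hξpos i).le)
        (add_nonneg (inv_nonneg.2 h1pos.le) (inv_nonneg.2 hm1neg.le))
    simp only [hKdef]; linarith
  refine ⟨∑ i, K i, fun t ht => ?_⟩
  have hMnn : (0:ℝ) ≤ ∑ i, K i := Finset.sum_nonneg fun i _ => hKnn i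
  rw [pi_norm_le_iff_of_nonneg hMnn]
  intro i
  rw [Real.norm_eq_abs]
  have hbound : |x t i| ≤ K i := by
    have hVt : V (x t) ≤ c := hmonot t ht
    have hterm : ξ i * (∫ s in (0:ℝ)..(x t i), h s) ≤ V (x t) := by
      rw [hV]
      exact Finset.single_le_sum (f := fun j => ξ j * ∫ s in (0:ℝ)..(x t j), h s)
        (fun j _ => mul_nonneg (hξpos j).le (aux_H_nonneg h hcont hmono h0 _))
        (Finset.mem_univ i)
    have hHle : (∫ s in (0:ℝ)..(x t i), h s) ≤ c / ξ i := by
      rw [le_div_iff₀ (hξpos i)]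
      calc (∫ s in (0:ℝ)..(x t i), h s) * ξ i
          = ξ i * ∫ s in (0:ℝ)..(x t i), h s := by ring
        _ ≤ V (x t) := hterm
        _ ≤ c := hVt
    exact aux_H_coercive h hcont hmono h0 (c / ξ i) (x t i)
      (div_nonneg hc0 (hξpos i).le) hHle
  calc |x t i| ≤ K i := hbound
    _ ≤ ∑ j, K j := Finset.single_le_sum (fun j _ => hKnn j) (Finset.mem_univ i)
end

section
/- (Main theorem) Suppose the weighted digraph G on n nodes is strongly connected with Laplacian L, and let h : ℝ → ℝ be continuous, strictly increasing, with h(0) = 0. Then for every initial state x(0) ∈ ℝⁿ, the solution of the nonlinear protocol ẋ_i(t) = −∑_{j=1}^n l_ij h(x_j(t)), i = 1, …, n, reaches consensus globally: for every i, lim_{t→∞} x_i(t) = x_ξ, where x_ξ = ∑_{i=1}^n ξ_i x_i(0) and ξ is the normalized positive left eigenvector of L corresponding to the eigenvalue 0 (ξᵀL = 0, ξ_i > 0, ∑ξ_i = 1). -/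
open Filter Set MeasureTheory intervalIntegral

lemma aux_barbalat (g : ℝ → ℝ) (C : ℝ)
    (hg0 : ∀ t, 0 ≤ g t)
    (hgi : ∀ T, 0 ≤ T → IntervalIntegrable g volume 0 T)
    (hbd : ∀ T, 0 ≤ T → (∫ t in (0:ℝ)..T, g t) ≤ C)
    (huc : ∀ ε > (0:ℝ), ∃ δ > (0:ℝ), ∀ s t : ℝ, 0 ≤ s → 0 ≤ t → |s - t| ≤ δ → |g s - g t| ≤ ε) :
    Filter.Tendsto g Filter.atTop (nhds 0) := by
  by_contra hcon
  rw [Metric.tendsto_atTop] at hcon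
  push_neg at hcon
  obtain ⟨ε, hε, hfreq⟩ := hcon
  obtain ⟨δ, hδ, hd⟩ := huc (ε/2) (by linarith)
  have hq : 0 < δ * (ε/2) := by positivity
  have key : ∀ k : ℕ, ∃ T, 0 ≤ T ∧ (k : ℝ) * (δ * (ε/2)) ≤ ∫ t in (0:ℝ)..T, g t := by
    intro k
    induction k with
    | zero => exact ⟨0, le_refl 0, by simp⟩
    | succ k ih =>
      obtain ⟨T, hT0, hTi⟩ := ih
      obtain ⟨t, ht, hgt⟩ := hfreq (max T 0)
      have htT : T ≤ t := le_trans (le_max_left _ _) ht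
      have ht0 : 0 ≤ t := le_trans (le_max_right _ _) ht
      have hgtε : ε ≤ g t := by
        rw [Real.dist_eq, sub_zero, abs_of_nonneg (hg0 t)] at hgt; linarith
      have hlow : ∀ s ∈ Icc t (t + δ), ε/2 ≤ g s := by
        intro s hs
        have h1 : |g s - g t| ≤ ε/2 := by
          refine hd s t (le_trans ht0 hs.1) ht0 ?_
          rw [abs_sub_le_iff]; constructor
          · linarith [hs.2]
          · linarith [hs.1]
        have := (abs_le.1 h1).2
        have := (abs_le.1 h1).1
        linarith
      have hint3 : IntervalIntegrable g volume t (t + δ) :=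
        (hgi (t + δ) (by linarith)).mono_set (by
          rw [uIcc_of_le (by linarith : t ≤ t + δ), uIcc_of_le (by linarith : (0:ℝ) ≤ t + δ)]
          exact Icc_subset_Icc ht0 le_rfl)
      have hint2 : IntervalIntegrable g volume T t :=
        (hgi t ht0).mono_set (by
          rw [uIcc_of_le htT, uIcc_of_le ht0]
          exact Icc_subset_Icc hT0 le_rfl)
      have hint1 : IntervalIntegrable g volume 0 T := hgi T hT0
      refine ⟨t + δ, by linarith, ?_⟩
      have hsplit : (∫ u in (0:ℝ)..(t+δ), g u) =
          (∫ u in (0:ℝ)..T, g u) + (∫ u in T..t, g u) + (∫ u in t..(t+δ), g u) := by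
        rw [integral_add_adjacent_intervals hint1 hint2,
          integral_add_adjacent_intervals (hint1.trans hint2) hint3]
      have h2 : 0 ≤ ∫ u in T..t, g u :=
        integral_nonneg htT (fun u _ => hg0 u)
      have h3 : δ * (ε/2) ≤ ∫ u in t..(t+δ), g u := by
        have := integral_mono_on (by linarith : t ≤ t + δ)
          (intervalIntegrable_const : IntervalIntegrable (fun _ => ε/2) volume t (t+δ)) hint3 hlow
        rw [intervalIntegral.integral_const] at this
        simpa [smul_eq_mul, add_sub_cancel_left] using this
      rw [hsplit]
      push_cast
      linarith
  obtain ⟨k, hk⟩ := exists_nat_gt (C / (δ * (ε/2)))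
  have hkC : C < k * (δ * (ε/2)) := by
    rwa [div_lt_iff₀ hq] at hk
  obtain ⟨T, hT0, hTi⟩ := key k
  exact absurd (hbd T hT0) (by linarith)
open Matrix BigOperators Finset

lemma aux_row (n : ℕ) (A : Matrix (Fin n) (Fin n) ℝ) (hdiag : ∀ i, A i i = 0)
    (L : Matrix (Fin n) (Fin n) ℝ)
    (hL : ∀ i j, L i j = if i = j then ∑ k ∈ Finset.univ.erase i, A i k else -A i j)
    (y : Fin n → ℝ) (i : Fin n) :
    (∑ j, L i j * y j) = ∑ j, A i j * (y i - y j) := by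
  rw [← Finset.sum_erase_add _ _ (Finset.mem_univ i),
      ← Finset.sum_erase_add _ _ (Finset.mem_univ i)]
  rw [hL i i, if_pos rfl, hdiag i]
  have h1 : ∀ j ∈ Finset.univ.erase i, L i j * y j = -(A i j * y j) := by
    intro j hj
    rw [hL i j, if_neg (by exact fun hc => (Finset.mem_erase.1 hj).1 (hc.symm ▸ rfl))]
    ring
  rw [Finset.sum_congr rfl h1]
  have h2 : ∀ j ∈ Finset.univ.erase i, A i j * (y i - y j) = A i j * y i - A i j * y j := by
    intro j _; ring
  rw [Finset.sum_congr rfl h2, Finset.sum_sub_distrib, ← Finset.sum_mul]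
  ring_nf
  rw [Finset.sum_neg_distrib]
  ring

lemma aux_col (n : ℕ) (A : Matrix (Fin n) (Fin n) ℝ) (hdiag : ∀ i, A i i = 0)
    (L : Matrix (Fin n) (Fin n) ℝ)
    (hL : ∀ i j, L i j = if i = j then ∑ k ∈ Finset.univ.erase i, A i k else -A i j)
    (ξ : Fin n → ℝ) (hξ : ξ ᵥ* L = 0) (j : Fin n) :
    ∑ i, ξ i * A i j = ξ j * ∑ k, A j k := by
  have h0 : ∑ i, ξ i * L i j = 0 := by
    have := congrFun hξ j
    simpa [Matrix.vecMul, dotProduct] using this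
  rw [← Finset.sum_erase_add _ _ (Finset.mem_univ j)] at h0 ⊢
  rw [hL j j, if_pos rfl] at h0
  have h1 : ∀ i ∈ Finset.univ.erase j, ξ i * L i j = -(ξ i * A i j) := by
    intro i hi
    rw [hL i j, if_neg (Finset.mem_erase.1 hi).1]; ring
  rw [Finset.sum_congr rfl h1, Finset.sum_neg_distrib] at h0
  rw [hdiag j, ← Finset.sum_erase_add _ (fun k => A j k) (Finset.mem_univ j), hdiag j]
  linarith

lemma aux_quad (n : ℕ) (A : Matrix (Fin n) (Fin n) ℝ) (hdiag : ∀ i, A i i = 0)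
    (L : Matrix (Fin n) (Fin n) ℝ)
    (hL : ∀ i j, L i j = if i = j then ∑ k ∈ Finset.univ.erase i, A i k else -A i j)
    (ξ : Fin n → ℝ) (hξ : ξ ᵥ* L = 0) (y : Fin n → ℝ) :
    2 * ∑ i, ξ i * y i * (∑ j, L i j * y j) = ∑ i, ∑ j, ξ i * A i j * (y i - y j)^2 := by
  have hrow : ∀ i, (∑ j, L i j * y j) = ∑ j, A i j * (y i - y j) :=
    aux_row n A hdiag L hL y
  have key : ∑ i, ∑ j, ξ i * A i j * (y j)^2 = ∑ i, ∑ j, ξ i * A i j * (y i)^2 := by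
    rw [Finset.sum_comm]
    have l1 : ∀ j : Fin n, ∑ i, ξ i * A i j * (y j)^2 = (∑ i, ξ i * A i j) * (y j)^2 := by
      intro j; rw [Finset.sum_mul]
    have l2 : ∀ i : Fin n, ∑ j, ξ i * A i j * (y i)^2 = ξ i * (∑ k, A i k) * (y i)^2 := by
      intro i; rw [Finset.mul_sum, Finset.sum_mul]
    simp_rw [l1, l2, aux_col n A hdiag L hL ξ hξ]
  have expand : ∀ i, 2 * (ξ i * y i * (∑ j, L i j * y j)) =
      ∑ j, (ξ i * A i j * (y i - y j)^2 + (ξ i * A i j * (y i)^2 - ξ i * A i j * (y j)^2)) := by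
    intro i
    rw [hrow i, Finset.mul_sum, Finset.mul_sum]
    exact Finset.sum_congr rfl fun j _ => by ring
  calc 2 * ∑ i, ξ i * y i * (∑ j, L i j * y j)
      = ∑ i, 2 * (ξ i * y i * (∑ j, L i j * y j)) := Finset.mul_sum _ _ _
    _ = ∑ i, ∑ j, (ξ i * A i j * (y i - y j)^2 + (ξ i * A i j * (y i)^2 - ξ i * A i j * (y j)^2)) :=
        Finset.sum_congr rfl fun i _ => expand i
    _ = ∑ i, ∑ j, ξ i * A i j * (y i - y j)^2 := by
        simp only [Finset.sum_add_distrib, Finset.sum_sub_distrib]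
        rw [key]
        ring


set_option maxHeartbeats 2000000 in
open Filter Set MeasureTheory in
/-- Main theorem: On a strongly connected weighted digraph with
Laplacian `L`, and `h` continuous, strictly increasing with `h(0) = 0`, every
solution of `ẋ_i = -∑_j l_ij h(x_j)` reaches consensus:
`x_i(t) → x_ξ = ∑ j, ξ_j x_j(0)` as `t → ∞` for every `i`, where `ξ` is the
normalized positive left eigenvector of `L` for eigenvalue `0`. -/
theorem nonlinear_consensus_main
    (n : ℕ) (A : Matrix (Fin n) (Fin n) ℝ)
    (hA : ∀ i j, 0 ≤ A i j) (hdiag : ∀ i, A i i = 0)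
    (hSC : ∀ i j : Fin n, i ≠ j → Relation.TransGen (fun u v => 0 < A u v) i j)
    (L : Matrix (Fin n) (Fin n) ℝ)
    (hL : ∀ i j, L i j = if i = j then ∑ k ∈ Finset.univ.erase i, A i k else -A i j)
    (ξ : Fin n → ℝ) (hξpos : ∀ i, 0 < ξ i) (hξsum : ∑ i, ξ i = 1)
    (hξ : ξ ᵥ* L = 0)
    (h : ℝ → ℝ) (hcont : Continuous h) (hmono : StrictMono h) (h0 : h 0 = 0)
    (x : ℝ → Fin n → ℝ)
    (hode : ∀ i, ∀ t ∈ Set.Ici (0 : ℝ),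
      HasDerivWithinAt (fun s => x s i) (-∑ j, L i j * h (x t j)) (Set.Ici (0 : ℝ)) t) :
    ∀ i, Filter.Tendsto (fun t => x t i) Filter.atTop
      (nhds (∑ j, ξ j * x 0 j)) := by
  classical
  intro i₀
  have hne : (Finset.univ : Finset (Fin n)).Nonempty := ⟨i₀, Finset.mem_univ _⟩
  have hxc : ∀ i, ContinuousOn (fun t => x t i) (Set.Ici 0) :=
    fun i t ht => (hode i t ht).continuousWithinAt
  -- dissipation function
  set g : ℝ → ℝ := fun t => ∑ i, ∑ j, ξ i * A i j * (h (x t i) - h (x t j))^2 with hgdef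
  have hg0 : ∀ t, 0 ≤ g t := by
    intro t
    apply Finset.sum_nonneg; intro i _
    apply Finset.sum_nonneg; intro j _
    have h1 := hA i j; have h2 := (hξpos i).le
    positivity
  -- primitive of h
  set H : ℝ → ℝ := fun v => ∫ u in (0:ℝ)..v, h u with hHdef
  have hHd : ∀ v, HasDerivAt H (h v) v := fun v => (hcont.integral_hasStrictDerivAt 0 v).hasDerivAt
  have hint : ∀ a b : ℝ, IntervalIntegrable h MeasureTheory.volume a b :=
    fun a b => hcont.intervalIntegrable a b
  have hHnn : ∀ v, 0 ≤ H v := by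
    intro v
    rcases le_or_gt 0 v with hv | hv
    · exact intervalIntegral.integral_nonneg hv (fun u hu => by
        simpa [h0] using hmono.monotone hu.1)
    · simp only [hHdef]
      rw [intervalIntegral.integral_symm]
      have hle : (∫ u in v..(0:ℝ), h u) ≤ ∫ u in v..(0:ℝ), (0:ℝ) := by
        apply intervalIntegral.integral_mono_on hv.le (hint v 0) intervalIntegrable_const
        intro u hu
        simpa [h0] using hmono.monotone hu.2
      simp only [intervalIntegral.integral_zero] at hle
      linarith
  -- Lyapunov function
  set V : ℝ → ℝ := fun t => ∑ i, ξ i * H (x t i) with hVdef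
  have hVd : ∀ t ∈ Set.Ici (0:ℝ), HasDerivWithinAt V (-(g t)/2) (Set.Ici 0) t := by
    intro t ht
    have comp : ∀ i ∈ Finset.univ, HasDerivWithinAt (fun s => ξ i * H (x s i))
        (ξ i * (h (x t i) * (-∑ j, L i j * h (x t j)))) (Set.Ici 0) t := by
      intro i _
      exact ((hHd (x t i)).comp_hasDerivWithinAt t (hode i t ht)).const_mul (ξ i)
    have hsum := HasDerivWithinAt.fun_sum comp
    have hval : ∑ i, ξ i * (h (x t i) * (-∑ j, L i j * h (x t j))) = -(g t)/2 := by
      have hq := aux_quad n A hdiag L hL ξ hξ (fun j => h (x t j))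
      have e1 : ∑ i, ξ i * (h (x t i) * (-∑ j, L i j * h (x t j)))
          = -∑ i, ξ i * h (x t i) * (∑ j, L i j * h (x t j)) := by
        rw [← Finset.sum_neg_distrib]
        exact Finset.sum_congr rfl fun i _ => by ring
      rw [e1]
      simp only [hgdef]
      linarith
    rwa [hval] at hsum
  have hVc : ContinuousOn V (Set.Ici 0) := fun t ht => (hVd t ht).continuousWithinAt
  have hgc : ContinuousOn g (Set.Ici 0) := by
    simp only [hgdef]
    apply continuousOn_finset_sum; intro i _
    apply continuousOn_finset_sum; intro j _
    exact continuousOn_const.mul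
      (((hcont.comp_continuousOn (hxc i)).sub (hcont.comp_continuousOn (hxc j))).pow 2)
  have hgi : ∀ T, 0 ≤ T → IntervalIntegrable g MeasureTheory.volume 0 T := by
    intro T hT
    apply ContinuousOn.intervalIntegrable
    apply hgc.mono
    rw [Set.uIcc_of_le hT]
    exact fun u hu => hu.1
  have hftc : ∀ T, 0 ≤ T → (∫ u in (0:ℝ)..T, -(g u)/2) = V T - V 0 := by
    intro T hT
    apply intervalIntegral.integral_eq_sub_of_hasDeriv_right_of_le hT
      (hVc.mono (fun u hu => hu.1))
      (fun u hu => (hVd u (le_of_lt hu.1)).mono (fun v hv => le_trans (le_of_lt hu.1) (le_of_lt hv)))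
    have := ((hgi T hT).neg).div_const (2:ℝ)
    simpa [neg_div] using this
  have hVnn : ∀ t, 0 ≤ V t := fun t =>
    Finset.sum_nonneg fun i _ => mul_nonneg (hξpos i).le (hHnn _)
  have hhalf : ∀ T : ℝ, (∫ u in (0:ℝ)..T, -(g u)/2) = (-(1:ℝ)/2) * ∫ u in (0:ℝ)..T, g u := by
    intro T
    rw [← intervalIntegral.integral_const_mul]
    apply intervalIntegral.integral_congr
    intro u _; ring
  have hbdI : ∀ T, 0 ≤ T → (∫ u in (0:ℝ)..T, g u) ≤ 2 * V 0 := by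
    intro T hT
    have h1 := hftc T hT
    rw [hhalf T] at h1
    have h2 := hVnn T
    linarith
  have hVmono : ∀ T, 0 ≤ T → V T ≤ V 0 := by
    intro T hT
    have h1 := hftc T hT
    rw [hhalf T] at h1
    have h2 : 0 ≤ ∫ u in (0:ℝ)..T, g u :=
      intervalIntegral.integral_nonneg hT (fun u _ => hg0 u)
    linarith
  -- uniform bound on the solution
  obtain ⟨im, _, him⟩ := Finset.exists_min_image Finset.univ ξ hne
  have hξm : 0 < ξ im := hξpos im
  have hHbound : ∀ t, 0 ≤ t → ∀ i, H (x t i) ≤ V 0 / ξ im := by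
    intro t ht i
    have h1 : ξ i * H (x t i) ≤ V t := by
      simp only [hVdef]
      exact Finset.single_le_sum (f := fun j => ξ j * H (x t j))
        (fun j _ => mul_nonneg (hξpos j).le (hHnn _)) (Finset.mem_univ i)
    have h2 := hVmono t ht
    have h3 : ξ im * H (x t i) ≤ V 0 :=
      le_trans (mul_le_mul_of_nonneg_right (him i (Finset.mem_univ i)) (hHnn _)) (le_trans h1 h2)
    rw [le_div_iff₀ hξm]
    linarith [h3]
  have hh1 : 0 < h 1 := by
    have := hmono (show (0:ℝ) < 1 by norm_num); rwa [h0] at this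
  have hhm1 : h (-1) < 0 := by
    have := hmono (show (-1:ℝ) < 0 by norm_num); rwa [h0] at this
  have grow1 : ∀ v, 1 ≤ v → (v - 1) * h 1 ≤ H v := by
    intro v hv
    have e : H v = (∫ u in (0:ℝ)..1, h u) + ∫ u in (1:ℝ)..v, h u := by
      simp only [hHdef]
      exact (intervalIntegral.integral_add_adjacent_intervals (hint 0 1) (hint 1 v)).symm
    have p1 : 0 ≤ ∫ u in (0:ℝ)..1, h u :=
      intervalIntegral.integral_nonneg zero_le_one (fun u hu => by
        simpa [h0] using hmono.monotone hu.1)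
    have p2 : (v - 1) * h 1 ≤ ∫ u in (1:ℝ)..v, h u := by
      have := intervalIntegral.integral_mono_on hv intervalIntegrable_const (hint 1 v)
        (fun u hu => hmono.monotone hu.1)
      rw [intervalIntegral.integral_const] at this
      simpa [smul_eq_mul] using this
    linarith
  have grow2 : ∀ v, v ≤ -1 → (-v - 1) * (-h (-1)) ≤ H v := by
    intro v hv
    have e : H v = -((∫ u in v..(-1:ℝ), h u) + ∫ u in (-1:ℝ)..(0:ℝ), h u) := by
      simp only [hHdef]
      rw [intervalIntegral.integral_symm]
      rw [intervalIntegral.integral_add_adjacent_intervals (hint v (-1)) (hint (-1) 0)]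
    have p1 : (∫ u in (-1:ℝ)..(0:ℝ), h u) ≤ 0 := by
      have := intervalIntegral.integral_mono_on (by norm_num : (-1:ℝ) ≤ 0) (hint (-1) 0)
        (intervalIntegrable_const) (fun u hu => by
          simpa [h0] using hmono.monotone hu.2)
      simpa using this
    have p2 : (∫ u in v..(-1:ℝ), h u) ≤ (-1 - v) * h (-1) := by
      have := intervalIntegral.integral_mono_on hv (hint v (-1)) intervalIntegrable_const
        (fun u hu => hmono.monotone hu.2)
      rw [intervalIntegral.integral_const] at this
      simpa [smul_eq_mul] using this
    rw [e]
    nlinarith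
  set B : ℝ := max 1 (max (1 + (V 0 / ξ im) / h 1) (1 + (V 0 / ξ im) / (-h (-1)))) with hBdef
  have hB1 : (1:ℝ) ≤ B := le_max_left _ _
  have hxB : ∀ t, 0 ≤ t → ∀ i, x t i ∈ Set.Icc (-B) B := by
    intro t ht i
    have hHb := hHbound t ht i
    constructor
    · by_contra hcon
      push_neg at hcon
      have hv : x t i ≤ -1 := by linarith
      have hg2 := grow2 _ hv
      have h4 : (-(x t i) - 1) ≤ (V 0 / ξ im) / (-h (-1)) := by
        rw [le_div_iff₀ (by linarith : (0:ℝ) < -h (-1))]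
        nlinarith
      have h5 : 1 + (V 0 / ξ im) / (-h (-1)) ≤ B :=
        le_trans (le_max_right _ _) (le_max_right _ _)
      linarith
    · by_contra hcon
      push_neg at hcon
      have hv : 1 ≤ x t i := by linarith
      have hg1 := grow1 _ hv
      have h4 : (x t i - 1) ≤ (V 0 / ξ im) / h 1 := by
        rw [le_div_iff₀ hh1]
        nlinarith
      have h5 : 1 + (V 0 / ξ im) / h 1 ≤ B :=
        le_trans (le_max_left _ _) (le_max_right _ _)
      linarith
  -- bound on h on the compact box
  obtain ⟨v₀, hv₀mem, hv₀max⟩ := isCompact_Icc.exists_isMaxOn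
    (Set.nonempty_Icc.2 (by linarith : -B ≤ B))
    ((continuous_abs.comp hcont).continuousOn)
  set C₀ : ℝ := |h v₀| with hC₀def
  have hC₀ : ∀ v ∈ Set.Icc (-B) B, |h v| ≤ C₀ := fun v hv => (isMaxOn_iff.1 hv₀max) v hv
  have hC₀0 : 0 ≤ C₀ := abs_nonneg _
  -- Lipschitz bound on solutions
  set K : ℝ := (∑ i, ∑ j, |L i j|) * C₀ + 1 with hKdef
  have hLsum0 : 0 ≤ (∑ i : Fin n, ∑ j, |L i j|) :=
    Finset.sum_nonneg fun i _ => Finset.sum_nonneg fun j _ => abs_nonneg _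
  have hK0 : 0 < K := by
    simp only [hKdef]; nlinarith
  have hderivbound : ∀ i : Fin n, ∀ t ∈ Set.Ici (0:ℝ), ‖-∑ j, L i j * h (x t j)‖ ≤ K := by
    intro i t ht
    rw [Real.norm_eq_abs, abs_neg]
    calc |∑ j, L i j * h (x t j)| ≤ ∑ j, |L i j * h (x t j)| := Finset.abs_sum_le_sum_abs _ _
      _ ≤ ∑ j, |L i j| * C₀ := Finset.sum_le_sum (fun j _ => by
            rw [abs_mul]
            exact mul_le_mul_of_nonneg_left (hC₀ _ (hxB t ht j)) (abs_nonneg _))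
      _ = (∑ j, |L i j|) * C₀ := (Finset.sum_mul _ _ _).symm
      _ ≤ (∑ i, ∑ j, |L i j|) * C₀ := by
            apply mul_le_mul_of_nonneg_right _ hC₀0
            exact Finset.single_le_sum (f := fun i => ∑ j, |L i j|)
              (fun i _ => Finset.sum_nonneg fun j _ => abs_nonneg _) (Finset.mem_univ i)
      _ ≤ K := by simp only [hKdef]; linarith
  have hlip : ∀ i : Fin n, ∀ s ∈ Set.Ici (0:ℝ), ∀ t ∈ Set.Ici (0:ℝ),
      |x s i - x t i| ≤ K * |s - t| := by
    intro i s hs t ht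
    have := (convex_Ici (0:ℝ)).norm_image_sub_le_of_norm_hasDerivWithin_le
      (f' := fun u => -∑ j, L i j * h (x u j)) (fun u hu => hode i u hu)
      (fun u hu => hderivbound i u hu) ht hs
    simpa [Real.norm_eq_abs] using this
  -- uniform continuity of h on the box
  have huch := (isCompact_Icc (a := -B) (b := B)).uniformContinuousOn_of_continuous
    hcont.continuousOn
  rw [Metric.uniformContinuousOn_iff] at huch
  -- total weight
  set W : ℝ := ∑ i, ∑ j, ξ i * A i j with hWdef
  have hW0 : 0 ≤ W :=
    Finset.sum_nonneg fun i _ => Finset.sum_nonneg fun j _ =>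
      mul_nonneg (hξpos i).le (hA i j)
  -- uniform continuity of g
  have hucg : ∀ ε > (0:ℝ), ∃ δ > (0:ℝ), ∀ s t : ℝ, 0 ≤ s → 0 ≤ t →
      |s - t| ≤ δ → |g s - g t| ≤ ε := by
    intro ε hε
    set η : ℝ := ε / (8 * C₀ * W + 1) with hηdef
    have hη : 0 < η := by
      apply div_pos hε; nlinarith
    obtain ⟨δ', hδ', hd'⟩ := huch η hη
    refine ⟨δ' / (2 * (K + 1)), by positivity, ?_⟩
    intro s t hs ht hst
    have hcoord : ∀ i, |h (x s i) - h (x t i)| ≤ η := by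
      intro i
      have h1 : |x s i - x t i| ≤ K * |s - t| := hlip i s hs t ht
      have h2 : K * |s - t| < δ' := by
        have h3 : K * |s - t| ≤ K * (δ' / (2 * (K + 1))) :=
          mul_le_mul_of_nonneg_left hst hK0.le
        have h4 : K * (δ' / (2 * (K + 1))) < δ' := by
          have e4 : K * (δ' / (2 * (K + 1))) = δ' * (K / (2 * (K + 1))) := by ring
          have hlt1 : K / (2 * (K + 1)) < 1 := (div_lt_one (by linarith)).2 (by linarith)
          calc K * (δ' / (2 * (K + 1))) = δ' * (K / (2 * (K + 1))) := e4
            _ < δ' * 1 := by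
                apply mul_lt_mul_of_pos_left hlt1 hδ'
            _ = δ' := mul_one _
        exact lt_of_le_of_lt h3 h4
      have := hd' (x s i) (hxB s hs i) (x t i) (hxB t ht i)
        (by rw [Real.dist_eq]; linarith)
      rw [Real.dist_eq] at this
      linarith
    have hterm : ∀ i j : Fin n,
        |(h (x s i) - h (x s j))^2 - (h (x t i) - h (x t j))^2| ≤ 8 * C₀ * η := by
      intro i j
      have e : (h (x s i) - h (x s j))^2 - (h (x t i) - h (x t j))^2
          = ((h (x s i) - h (x s j)) - (h (x t i) - h (x t j)))
            * ((h (x s i) - h (x s j)) + (h (x t i) - h (x t j))) := by ring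
      rw [e, abs_mul]
      have h1 : |(h (x s i) - h (x s j)) - (h (x t i) - h (x t j))| ≤ 2 * η := by
        have e2 : (h (x s i) - h (x s j)) - (h (x t i) - h (x t j))
            = (h (x s i) - h (x t i)) + (-(h (x s j) - h (x t j))) := by ring
        rw [e2]
        calc |(h (x s i) - h (x t i)) + (-(h (x s j) - h (x t j)))|
            ≤ |h (x s i) - h (x t i)| + |(-(h (x s j) - h (x t j)))| := abs_add_le _ _
          _ ≤ η + η := by
              rw [abs_neg]
              exact add_le_add (hcoord i) (hcoord j)
          _ = 2 * η := by ring
      have h2 : |(h (x s i) - h (x s j)) + (h (x t i) - h (x t j))| ≤ 4 * C₀ := by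
        have b1 : |h (x s i) - h (x s j)| ≤ 2 * C₀ := by
          calc |h (x s i) - h (x s j)| = |h (x s i) + (-(h (x s j)))| := by ring_nf
            _ ≤ |h (x s i)| + |(-(h (x s j)))| := abs_add_le _ _
            _ ≤ C₀ + C₀ := by
                rw [abs_neg]
                exact add_le_add (hC₀ _ (hxB s hs i)) (hC₀ _ (hxB s hs j))
            _ = 2 * C₀ := by ring
        have b2 : |h (x t i) - h (x t j)| ≤ 2 * C₀ := by
          calc |h (x t i) - h (x t j)| = |h (x t i) + (-(h (x t j)))| := by ring_nf
            _ ≤ |h (x t i)| + |(-(h (x t j)))| := abs_add_le _ _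
            _ ≤ C₀ + C₀ := by
                rw [abs_neg]
                exact add_le_add (hC₀ _ (hxB t ht i)) (hC₀ _ (hxB t ht j))
            _ = 2 * C₀ := by ring
        calc |(h (x s i) - h (x s j)) + (h (x t i) - h (x t j))|
            ≤ |h (x s i) - h (x s j)| + |h (x t i) - h (x t j)| := abs_add_le _ _
          _ ≤ 4 * C₀ := by linarith
      calc |(h (x s i) - h (x s j)) - (h (x t i) - h (x t j))|
            * |(h (x s i) - h (x s j)) + (h (x t i) - h (x t j))|
          ≤ (2 * η) * (4 * C₀) := mul_le_mul h1 h2 (abs_nonneg _) (by positivity)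
        _ = 8 * C₀ * η := by ring
    have hgdiff : g s - g t = ∑ i, ∑ j, ξ i * A i j *
        ((h (x s i) - h (x s j))^2 - (h (x t i) - h (x t j))^2) := by
      simp only [hgdef]
      rw [← Finset.sum_sub_distrib]
      apply Finset.sum_congr rfl; intro i _
      rw [← Finset.sum_sub_distrib]
      apply Finset.sum_congr rfl; intro j _
      ring
    calc |g s - g t| = |∑ i, ∑ j, ξ i * A i j *
          ((h (x s i) - h (x s j))^2 - (h (x t i) - h (x t j))^2)| := by rw [hgdiff]
      _ ≤ ∑ i, |∑ j, ξ i * A i j *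
          ((h (x s i) - h (x s j))^2 - (h (x t i) - h (x t j))^2)| :=
          Finset.abs_sum_le_sum_abs _ _
      _ ≤ ∑ i, ∑ j, ξ i * A i j * (8 * C₀ * η) := by
          apply Finset.sum_le_sum; intro i _
          calc |∑ j, ξ i * A i j *
              ((h (x s i) - h (x s j))^2 - (h (x t i) - h (x t j))^2)|
              ≤ ∑ j, |ξ i * A i j *
                ((h (x s i) - h (x s j))^2 - (h (x t i) - h (x t j))^2)| :=
                Finset.abs_sum_le_sum_abs _ _
            _ ≤ ∑ j, ξ i * A i j * (8 * C₀ * η) := by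
                apply Finset.sum_le_sum; intro j _
                rw [abs_mul, abs_of_nonneg (mul_nonneg (hξpos i).le (hA i j))]
                exact mul_le_mul_of_nonneg_left (hterm i j)
                  (mul_nonneg (hξpos i).le (hA i j))
      _ = W * (8 * C₀ * η) := by
          simp only [hWdef]
          rw [Finset.sum_mul]
          apply Finset.sum_congr rfl; intro i _
          rw [Finset.sum_mul]
      _ ≤ ε := by
          have hpos : (0:ℝ) < 8 * C₀ * W + 1 := by nlinarith
          have he : (8 * C₀ * W + 1) * η = ε := by
            rw [hηdef, mul_comm, div_mul_cancel₀ _ (ne_of_gt hpos)]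
          have h6 : 8 * C₀ * W * η ≤ (8 * C₀ * W + 1) * η :=
            mul_le_mul_of_nonneg_right (by linarith) hη.le
          calc W * (8 * C₀ * η) = 8 * C₀ * W * η := by ring
            _ ≤ (8 * C₀ * W + 1) * η := h6
            _ = ε := he
  -- Barbalat's lemma: g → 0
  have hgtends : Filter.Tendsto g Filter.atTop (nhds 0) :=
    aux_barbalat g (2 * V 0) hg0 hgi hbdI hucg
  -- each edge difference tends to 0
  have hedge : ∀ i j : Fin n, 0 < A i j →
      Filter.Tendsto (fun t => h (x t i) - h (x t j)) Filter.atTop (nhds 0) := by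
    intro i j hAij
    have hconst : 0 < ξ i * A i j := mul_pos (hξpos i) hAij
    have hle : ∀ t, ξ i * A i j * (h (x t i) - h (x t j))^2 ≤ g t := by
      intro t
      simp only [hgdef]
      calc ξ i * A i j * (h (x t i) - h (x t j))^2
          ≤ ∑ j', ξ i * A i j' * (h (x t i) - h (x t j'))^2 :=
            Finset.single_le_sum (f := fun j' => ξ i * A i j' * (h (x t i) - h (x t j'))^2)
              (fun j' _ => by have := hA i j'; have := (hξpos i).le; positivity)
              (Finset.mem_univ j)
        _ ≤ ∑ i', ∑ j', ξ i' * A i' j' * (h (x t i') - h (x t j'))^2 :=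
            Finset.single_le_sum (f := fun i' => ∑ j', ξ i' * A i' j' * (h (x t i') - h (x t j'))^2)
              (fun i' _ => Finset.sum_nonneg fun j' _ => by
                have := hA i' j'; have := (hξpos i').le; positivity)
              (Finset.mem_univ i)
    have hsqueeze : Filter.Tendsto (fun t => ξ i * A i j * (h (x t i) - h (x t j))^2)
        Filter.atTop (nhds 0) :=
      squeeze_zero (fun t => by have := hA i j; have := (hξpos i).le; positivity)
        hle hgtends
    have hsq : Filter.Tendsto (fun t => (h (x t i) - h (x t j))^2) Filter.atTop (nhds 0) := by
      have h2 := hsqueeze.const_mul (1 / (ξ i * A i j))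
      rw [mul_zero] at h2
      refine h2.congr (fun t => ?_)
      field_simp [(hξpos i).ne', hAij.ne']
    have habs : Filter.Tendsto (fun t => |h (x t i) - h (x t j)|) Filter.atTop (nhds 0) := by
      have := hsq.sqrt
      simpa [Real.sqrt_sq_eq_abs] using this
    exact (tendsto_zero_iff_abs_tendsto_zero _).2 habs
  -- all pairwise h-differences tend to 0
  have hpair : ∀ i j : Fin n,
      Filter.Tendsto (fun t => h (x t i) - h (x t j)) Filter.atTop (nhds 0) := by
    have key : ∀ i j : Fin n, Relation.TransGen (fun u v => 0 < A u v) i j →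
        Filter.Tendsto (fun t => h (x t i) - h (x t j)) Filter.atTop (nhds 0) := by
      intro i j hrel
      induction hrel with
      | single hstep => exact hedge _ _ hstep
      | tail hrel hstep ih =>
          have h2 := hedge _ _ hstep
          have h3 := ih.add h2
          rw [add_zero] at h3
          exact Filter.Tendsto.congr (fun t => by ring) h3
    intro i j
    rcases eq_or_ne i j with rfl | hij
    · simpa using (tendsto_const_nhds : Filter.Tendsto (fun _ : ℝ => (0:ℝ)) Filter.atTop (nhds 0))
    · exact key i j (hSC i j hij)
  -- all pairwise x-differences tend to 0
  have hxpair : ∀ i j : Fin n,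
      Filter.Tendsto (fun t => x t i - x t j) Filter.atTop (nhds 0) := by
    intro i j
    rw [Metric.tendsto_atTop]
    intro ε hε
    obtain ⟨a₀, ha₀mem, ha₀min⟩ := isCompact_Icc.exists_isMinOn
      (Set.nonempty_Icc.2 (by linarith : -B ≤ B))
      (((hcont.comp (continuous_id.add continuous_const)).sub hcont).continuousOn :
        ContinuousOn (fun a => h (a + ε) - h a) (Set.Icc (-B) B))
    have hδ₀ : 0 < h (a₀ + ε) - h a₀ := sub_pos.2 (hmono (by linarith : a₀ < a₀ + ε))
    have hpd := hpair i j
    rw [Metric.tendsto_atTop] at hpd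
    obtain ⟨N₁, hN₁⟩ := hpd (h (a₀ + ε) - h a₀) hδ₀
    refine ⟨max N₁ 0, ?_⟩
    intro t ht
    have ht0 : 0 ≤ t := le_trans (le_max_right _ _) ht
    have htN : N₁ ≤ t := le_trans (le_max_left _ _) ht
    have hyd := hN₁ t htN
    rw [Real.dist_eq, sub_zero] at hyd ⊢
    by_contra hcon
    push_neg at hcon
    have hxi := hxB t ht0 i
    have hxj := hxB t ht0 j
    have main : ∀ u v : Fin n, x t u ∈ Set.Icc (-B) B → x t v ∈ Set.Icc (-B) B →
        x t v + ε ≤ x t u → h (a₀ + ε) - h a₀ ≤ h (x t u) - h (x t v) := by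
      intro u v hu hv huv
      have h1 : h (x t v + ε) ≤ h (x t u) := hmono.monotone huv
      have h2 : h (a₀ + ε) - h a₀ ≤ h (x t v + ε) - h (x t v) := (isMinOn_iff.1 ha₀min) _ hv
      linarith
    rcases abs_cases (x t i - x t j) with ⟨he, _⟩ | ⟨he, _⟩
    · have h4 := main i j hxi hxj (by linarith)
      have h5 := le_trans h4 (le_abs_self _)
      linarith
    · have h4 := main j i hxj hxi (by linarith)
      have h5 : h (a₀ + ε) - h a₀ ≤ |h (x t i) - h (x t j)| := by
        rw [abs_sub_comm]
        exact le_trans h4 (le_abs_self _)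
      linarith
  -- invariance of the weighted average
  have hvecmul : ∀ k : Fin n, ∑ i, ξ i * L i k = 0 := by
    intro k
    have := congrFun hξ k
    simpa [Matrix.vecMul, dotProduct] using this
  set p : ℝ → ℝ := fun t => ∑ j, ξ j * x t j with hpdef
  have hpd : ∀ t ∈ Set.Ici (0:ℝ), HasDerivWithinAt p 0 (Set.Ici 0) t := by
    intro t ht
    have comp : ∀ j ∈ Finset.univ, HasDerivWithinAt (fun s => ξ j * x s j)
        (ξ j * (-∑ k, L j k * h (x t k))) (Set.Ici 0) t :=
      fun j _ => (hode j t ht).const_mul (ξ j)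
    have hsum := HasDerivWithinAt.fun_sum comp
    have hval : ∑ j, ξ j * (-∑ k, L j k * h (x t k)) = 0 := by
      have e1 : ∀ j : Fin n, ξ j * (-∑ k, L j k * h (x t k))
          = ∑ k, -(ξ j * L j k * h (x t k)) := by
        intro j
        rw [mul_neg, Finset.mul_sum, ← Finset.sum_neg_distrib]
        exact Finset.sum_congr rfl fun k _ => by ring
      rw [Finset.sum_congr rfl fun j _ => e1 j, Finset.sum_comm]
      apply Finset.sum_eq_zero
      intro k _
      have e2 : ∑ j, -(ξ j * L j k * h (x t k)) = -((∑ j, ξ j * L j k) * h (x t k)) := by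
        rw [Finset.sum_neg_distrib, Finset.sum_mul]
      rw [e2, hvecmul k]
      simp
    rwa [hval] at hsum
  have hpc : ∀ t, 0 ≤ t → p t = p 0 := by
    intro t ht
    have hcp : ContinuousOn p (Set.Ici 0) := fun u hu => (hpd u hu).continuousWithinAt
    have := constant_of_has_deriv_right_zero (hcp.mono (fun u hu => hu.1))
      (fun u (hu : u ∈ Set.Ico 0 t) => (hpd u hu.1).mono (Set.Ici_subset_Ici.2 hu.1))
    exact this t (Set.right_mem_Icc.2 ht)
  -- conclusion
  have hfinal : Filter.Tendsto (fun t => ∑ j, ξ j * (x t i₀ - x t j))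
      Filter.atTop (nhds 0) := by
    have := tendsto_finset_sum Finset.univ (fun j _ => (hxpair i₀ j).const_mul (ξ j))
    simpa using this
  have hdecomp : ∀ t, 0 ≤ t →
      x t i₀ = (∑ j, ξ j * (x t i₀ - x t j)) + ∑ j, ξ j * x 0 j := by
    intro t ht
    have h1 : ∑ j, ξ j * (x t i₀ - x t j) = (∑ j, ξ j) * x t i₀ - p t := by
      calc ∑ j, ξ j * (x t i₀ - x t j)
          = ∑ j, (ξ j * x t i₀ - ξ j * x t j) := Finset.sum_congr rfl fun j _ => by ring
        _ = (∑ j, ξ j * x t i₀) - ∑ j, ξ j * x t j := Finset.sum_sub_distrib _ _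
        _ = (∑ j, ξ j) * x t i₀ - p t := by rw [Finset.sum_mul, hpdef]
    have h2 : p 0 = ∑ j, ξ j * x 0 j := by rw [hpdef]
    rw [h1, hξsum, hpc t ht, h2]
    ring
  have hT : Filter.Tendsto (fun t => (∑ j, ξ j * (x t i₀ - x t j)) + ∑ j, ξ j * x 0 j)
      Filter.atTop (nhds (0 + ∑ j, ξ j * x 0 j)) :=
    hfinal.add tendsto_const_nhds
  rw [zero_add] at hT
  apply Filter.Tendsto.congr' _ hT
  filter_upwards [Filter.eventually_ge_atTop (0:ℝ)] with t ht
  exact (hdecomp t ht).symm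
end

section
/- (Linear protocol special case) Suppose the weighted digraph G on n nodes is strongly connected with Laplacian L, and let α > 0. Then for every initial state x(0) ∈ ℝⁿ, the solution of the linear protocol ẋ(t) = −αL x(t) reaches consensus: for every i, lim_{t→∞} x_i(t) = ∑_{j=1}^n ξ_j x_j(0), where ξ is the normalized positive left eigenvector of L for the eigenvalue 0 (ξᵀL = 0, ξ_i > 0, ∑ξ_i = 1). -/
open Matrix BigOperators NormedSpace

attribute [local instance] Matrix.linftyOpNormedAddCommGroup Matrix.linftyOpNormedSpace
  Matrix.linftyOpNormedRing Matrix.linftyOpNormedAlgebra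

namespace LinConsensusAux

variable {n : ℕ}

noncomputable def entryCLM (i j : Fin n) : Matrix (Fin n) (Fin n) ℝ →L[ℝ] ℝ :=
  LinearMap.toContinuousLinearMap
    { toFun := fun M => M i j
      map_add' := fun _ _ => rfl
      map_smul' := fun _ _ => rfl }

lemma exp_entry (M : Matrix (Fin n) (Fin n) ℝ) (i j : Fin n) :
    exp M i j = ∑' (k : ℕ), ((k.factorial : ℝ))⁻¹ * (M ^ k) i j := by
  have h := (entryCLM i j).map_tsum (expSeries_summable' (𝕂 := ℝ) M)
  rw [exp_eq_tsum ℝ]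
  exact h

lemma entry_summable (M : Matrix (Fin n) (Fin n) ℝ) (i j : Fin n) :
    Summable fun k : ℕ => ((k.factorial : ℝ))⁻¹ * (M ^ k) i j := by
  have h := ((expSeries_summable' (𝕂 := ℝ) M).map
    (entryCLM i j).toLinearMap.toAddMonoidHom (entryCLM i j).continuous)
  exact h

lemma pow_entry_nonneg {N : Matrix (Fin n) (Fin n) ℝ} (hN : ∀ i j, 0 ≤ N i j) (k : ℕ) :
    ∀ i j, 0 ≤ (N ^ k) i j := by
  induction k with
  | zero => intro i j; by_cases h : i = j <;> simp [Matrix.one_apply, h]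
  | succ m ih =>
    intro i j
    rw [pow_succ, Matrix.mul_apply]
    exact Finset.sum_nonneg fun l _ => mul_nonneg (ih i l) (hN l j)

lemma exp_entry_nonneg {N : Matrix (Fin n) (Fin n) ℝ} (hN : ∀ i j, 0 ≤ N i j) (i j : Fin n) :
    0 ≤ exp N i j := by
  rw [exp_entry]
  exact tsum_nonneg fun k => mul_nonneg (by positivity) (pow_entry_nonneg hN k i j)

lemma exp_entry_pos {N : Matrix (Fin n) (Fin n) ℝ} (hN : ∀ i j, 0 ≤ N i j)
    (hpath : ∀ i j, i ≠ j → ∃ m : ℕ, 0 < (N ^ m) i j) (i j : Fin n) :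
    0 < exp N i j := by
  rw [exp_entry]
  have hnn : ∀ k : ℕ, 0 ≤ ((k.factorial : ℝ))⁻¹ * (N ^ k) i j := fun k =>
    mul_nonneg (by positivity) (pow_entry_nonneg hN k i j)
  by_cases h : i = j
  · subst h
    refine Summable.tsum_pos (entry_summable N i i) hnn 0 ?_
    simp [Matrix.one_apply]
  · obtain ⟨m, hm⟩ := hpath i j h
    refine Summable.tsum_pos (entry_summable N i j) hnn m ?_
    have : (0:ℝ) < ((m.factorial : ℝ))⁻¹ := by positivity
    exact mul_pos this hm

lemma exp_add_smul_one (N : Matrix (Fin n) (Fin n) ℝ) (c : ℝ) :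
    exp (N + c • (1 : Matrix (Fin n) (Fin n) ℝ)) = Real.exp c • exp N := by
  rw [Matrix.exp_add_of_commute _ _ ((Commute.one_right N).smul_right c)]
  have h1 : c • (1 : Matrix (Fin n) (Fin n) ℝ) = algebraMap ℝ _ c := by
    rw [Algebra.algebraMap_eq_smul_one]
  have h2 : exp ((algebraMap ℝ (Matrix (Fin n) (Fin n) ℝ)) c) = algebraMap ℝ _ (Real.exp c) := by
    rw [Real.exp_eq_exp_ℝ]; exact (algebraMap_exp_comm c).symm
  rw [h1, h2, Algebra.algebraMap_eq_smul_one,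
    mul_smul_comm, mul_one]

noncomputable def mulVecCLM (v : Fin n → ℝ) : Matrix (Fin n) (Fin n) ℝ →L[ℝ] (Fin n → ℝ) :=
  LinearMap.toContinuousLinearMap
    { toFun := fun M => M *ᵥ v
      map_add' := fun _ _ => Matrix.add_mulVec _ _ _
      map_smul' := fun c M => by simp [Matrix.smul_mulVec] }

lemma exp_mulVec_of_mulVec_eq_zero {M : Matrix (Fin n) (Fin n) ℝ} {v : Fin n → ℝ}
    (hv : M *ᵥ v = 0) : exp M *ᵥ v = v := by
  have h := (mulVecCLM v).map_tsum (expSeries_summable' (𝕂 := ℝ) M)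
  rw [exp_eq_tsum ℝ] at *
  have hterm : ∀ k : ℕ, (mulVecCLM v) (((k.factorial : ℝ))⁻¹ • M ^ k)
      = if k = 0 then v else 0 := by
    intro k
    cases k with
    | zero => simp [mulVecCLM]
    | succ m =>
      have : M ^ (m+1) *ᵥ v = 0 := by
        rw [pow_succ, ← Matrix.mulVec_mulVec, hv, Matrix.mulVec_zero]
      simp [mulVecCLM, Matrix.smul_mulVec, this]
  calc (∑' (k : ℕ), ((k.factorial : ℝ))⁻¹ • M ^ k) *ᵥ v
      = ∑' (k : ℕ), (mulVecCLM v) (((k.factorial : ℝ))⁻¹ • M ^ k) := h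
    _ = v := by
        rw [tsum_eq_single 0 (fun k hk => by rw [hterm k, if_neg hk])]
        simp [mulVecCLM]

lemma pow_path_pos {N : Matrix (Fin n) (Fin n) ℝ} (hN : ∀ i j, 0 ≤ N i j)
    {i j : Fin n} (h : Relation.TransGen (fun u v => 0 < N u v) i j) :
    ∃ m : ℕ, 0 < (N ^ m) i j := by
  induction h with
  | single hedge => exact ⟨1, by simpa using hedge⟩
  | @tail b c _hib hedge ih =>
    obtain ⟨m, hm⟩ := ih
    refine ⟨m + 1, ?_⟩
    rw [pow_succ, Matrix.mul_apply]
    refine Finset.sum_pos' (fun l _ => mul_nonneg (pow_entry_nonneg hN m i l) (hN l c)) ?_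
    exact ⟨b, Finset.mem_univ b, mul_pos hm hedge⟩

lemma stoch_bounds (hne : (Finset.univ : Finset (Fin n)).Nonempty)
    (P : Matrix (Fin n) (Fin n) ℝ) (δ : ℝ) (hδ : 0 ≤ δ)
    (hP : ∀ i j, δ ≤ P i j) (hrow : ∀ i, ∑ j, P i j = 1) (v : Fin n → ℝ) (i : Fin n) :
    Finset.univ.inf' hne v + δ * (Finset.univ.sup' hne v - Finset.univ.inf' hne v)
      ≤ (P *ᵥ v) i ∧
    (P *ᵥ v) i ≤ Finset.univ.sup' hne v - δ * (Finset.univ.sup' hne v - Finset.univ.inf' hne v)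
    := by
  set S := Finset.univ.sup' hne v with hS
  set I := Finset.univ.inf' hne v with hI
  have hIS : I ≤ S := by
    obtain ⟨a, _, ha⟩ := Finset.exists_mem_eq_inf' hne v
    rw [hI, ha]
    exact Finset.le_sup' v (Finset.mem_univ a)
  have hPnn : ∀ a b, (0:ℝ) ≤ P a b := fun a b => le_trans hδ (hP a b)
  have hvS : ∀ j, v j ≤ S := fun j => Finset.le_sup' v (Finset.mem_univ j)
  have hvI : ∀ j, I ≤ v j := fun j => Finset.inf'_le v (Finset.mem_univ j)
  constructor
  · obtain ⟨j1, _, hj1⟩ := Finset.exists_mem_eq_sup' hne v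
    have hsplit : (P *ᵥ v) i
        = P i j1 * v j1 + ∑ j ∈ Finset.univ.erase j1, P i j * v j := by
      rw [Matrix.mulVec, dotProduct]
      exact (Finset.add_sum_erase _ _ (Finset.mem_univ j1)).symm
    have hsum1 : ∑ j ∈ Finset.univ.erase j1, P i j = 1 - P i j1 := by
      have := Finset.add_sum_erase Finset.univ (fun j => P i j) (Finset.mem_univ j1)
      rw [hrow i] at this; linarith
    have hge : ∑ j ∈ Finset.univ.erase j1, P i j * v j
        ≥ ∑ j ∈ Finset.univ.erase j1, P i j * I :=
      Finset.sum_le_sum fun j _ => mul_le_mul_of_nonneg_left (hvI j) (hPnn i j)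
    rw [hsplit]
    have h2 : ∑ j ∈ Finset.univ.erase j1, P i j * I = (1 - P i j1) * I := by
      rw [← Finset.sum_mul, hsum1]
    rw [← hS] at hj1
    nlinarith [hP i j1, hIS, hge, h2, hj1]
  · obtain ⟨j0, _, hj0⟩ := Finset.exists_mem_eq_inf' hne v
    have hsplit : (P *ᵥ v) i
        = P i j0 * v j0 + ∑ j ∈ Finset.univ.erase j0, P i j * v j := by
      rw [Matrix.mulVec, dotProduct]
      exact (Finset.add_sum_erase _ _ (Finset.mem_univ j0)).symm
    have hsum1 : ∑ j ∈ Finset.univ.erase j0, P i j = 1 - P i j0 := by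
      have := Finset.add_sum_erase Finset.univ (fun j => P i j) (Finset.mem_univ j0)
      rw [hrow i] at this; linarith
    have hle : ∑ j ∈ Finset.univ.erase j0, P i j * v j
        ≤ ∑ j ∈ Finset.univ.erase j0, P i j * S :=
      Finset.sum_le_sum fun j _ => mul_le_mul_of_nonneg_left (hvS j) (hPnn i j)
    rw [hsplit]
    have h2 : ∑ j ∈ Finset.univ.erase j0, P i j * S = (1 - P i j0) * S := by
      rw [← Finset.sum_mul, hsum1]
    rw [← hI] at hj0
    nlinarith [hP i j0, hIS, hle, h2, hj0]

lemma sol_formula (B : Matrix (Fin n) (Fin n) ℝ) (x : ℝ → Fin n → ℝ)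
    (hx : ∀ t ∈ Set.Ici (0:ℝ), HasDerivWithinAt x (B *ᵥ x t) (Set.Ici (0:ℝ)) t)
    {t : ℝ} (ht : 0 ≤ t) : x t = exp (t • B) *ᵥ x 0 := by
  have hg' : ∀ s : ℝ, HasDerivAt (fun u : ℝ => exp (u • B) *ᵥ x 0)
      (B *ᵥ (exp (s • B) *ᵥ x 0)) s := by
    intro s
    have h1 := hasDerivAt_exp_smul_const' (𝕂 := ℝ) B s
    have h2 := (mulVecCLM (x 0)).hasFDerivAt.comp_hasDerivAt s h1
    have h3 : HasDerivAt (fun u : ℝ => exp (u • B) *ᵥ x 0) ((B * exp (s • B)) *ᵥ x 0) s := h2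
    rw [Matrix.mulVec_mulVec]; exact h3
  have hK : ∃ K : NNReal, LipschitzWith K fun z : Fin n → ℝ => B *ᵥ z := by
    refine ⟨‖(Matrix.mulVecLin B).toContinuousLinearMap‖₊, ?_⟩
    have := (Matrix.mulVecLin B).toContinuousLinearMap.lipschitz
    exact this
  obtain ⟨K, hKlip⟩ := hK
  have key := ODE_solution_unique (v := fun _ (z : Fin n → ℝ) => B *ᵥ z) (K := K)
    (f := x) (g := fun s => exp (s • B) *ᵥ x 0) (a := 0) (b := t)
    (fun _ => hKlip)
    (fun s hs => ((hx s hs.1).continuousWithinAt).mono fun u hu => hu.1)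
    (fun s hs => (hx s hs.1).mono (Set.Ici_subset_Ici.mpr hs.1))
    (fun s hs => ((hg' s).continuousAt).continuousWithinAt)
    (fun s hs => ((hg' s).hasDerivWithinAt))
    (by simp)
  exact key ⟨ht, le_refl t⟩

end LinConsensusAux

open LinConsensusAux Finset

/-- Linear protocol special case: On a strongly connected
weighted digraph with Laplacian `L` and `α > 0`, every solution of the linear
protocol `ẋ = -αLx` reaches consensus: `x_i(t) → ∑ j, ξ_j x_j(0)` for every
`i`, where `ξ` is the normalized positive left eigenvector of `L` for
eigenvalue `0`. -/
theorem linear_consensus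
    (n : ℕ) (A : Matrix (Fin n) (Fin n) ℝ)
    (hA : ∀ i j, 0 ≤ A i j) (hdiag : ∀ i, A i i = 0)
    (hSC : ∀ i j : Fin n, i ≠ j → Relation.TransGen (fun u v => 0 < A u v) i j)
    (L : Matrix (Fin n) (Fin n) ℝ)
    (hL : ∀ i j, L i j = if i = j then ∑ k ∈ Finset.univ.erase i, A i k else -A i j)
    (ξ : Fin n → ℝ) (hξpos : ∀ i, 0 < ξ i) (hξsum : ∑ i, ξ i = 1)
    (hξ : ξ ᵥ* L = 0)
    (α : ℝ) (hα : 0 < α)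
    (x : ℝ → Fin n → ℝ)
    (hode : ∀ i, ∀ t ∈ Set.Ici (0 : ℝ),
      HasDerivWithinAt (fun s => x s i) (-α * ∑ j, L i j * x t j) (Set.Ici (0 : ℝ)) t) :
    ∀ i, Filter.Tendsto (fun t => x t i) Filter.atTop
      (nhds (∑ j, ξ j * x 0 j)) := by
  intro i0
  have hne : (Finset.univ : Finset (Fin n)).Nonempty := ⟨i0, Finset.mem_univ i0⟩
  -- basic facts about L
  have hLdiag : ∀ i, L i i = ∑ k ∈ Finset.univ.erase i, A i k := fun i => by
    rw [hL]; simp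
  have hLdiag_nn : ∀ i, 0 ≤ L i i := fun i => by
    rw [hLdiag]; exact Finset.sum_nonneg fun k _ => hA i k
  have hLoff : ∀ i j, i ≠ j → L i j = -A i j := fun i j h => by
    rw [hL]; simp [h]
  have hrowL : ∀ i, ∑ j, L i j = 0 := by
    intro i
    rw [← Finset.add_sum_erase _ _ (Finset.mem_univ i), hLdiag]
    have : ∑ j ∈ Finset.univ.erase i, L i j = ∑ j ∈ Finset.univ.erase i, (-A i j) :=
      Finset.sum_congr rfl fun j hj => hLoff i j (Finset.ne_of_mem_erase hj).symm
    rw [this, Finset.sum_neg_distrib]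
    ring
  -- the matrix B
  set B : Matrix (Fin n) (Fin n) ℝ := (-α) • L with hB
  have hBapp : ∀ i j, B i j = -α * L i j := fun i j => rfl
  have hBvec1 : B *ᵥ (fun _ => (1:ℝ)) = 0 := by
    funext i
    simp only [Matrix.mulVec, dotProduct, hBapp, mul_one, Pi.zero_apply]
    rw [← Finset.mul_sum, hrowL i, mul_zero]
  -- vector form of the ODE
  have hxv : ∀ t ∈ Set.Ici (0:ℝ), HasDerivWithinAt x (B *ᵥ x t) (Set.Ici (0:ℝ)) t := by
    intro t ht
    rw [hasDerivWithinAt_pi]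
    intro i
    have heq : (B *ᵥ x t) i = -α * ∑ j, L i j * x t j := by
      simp only [Matrix.mulVec, dotProduct, hBapp, Finset.mul_sum]
      exact Finset.sum_congr rfl fun j _ => by ring
    rw [heq]
    exact hode i t ht
  have hxf : ∀ t : ℝ, 0 ≤ t → x t = exp (t • B) *ᵥ x 0 := fun t ht =>
    sol_formula B x hxv ht
  -- the nonnegative matrix N
  set c : ℝ := 1 + α * ∑ i, L i i with hc
  set N : Matrix (Fin n) (Fin n) ℝ := B + c • (1 : Matrix (Fin n) (Fin n) ℝ) with hN
  have hNapp : ∀ i j, N i j = -α * L i j + c * (if i = j then (1:ℝ) else 0) := by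
    intro i j
    simp [hN, Matrix.add_apply, Matrix.smul_apply, Matrix.one_apply, hBapp, smul_eq_mul]
  have hNnn : ∀ i j, 0 ≤ N i j := by
    intro i j
    rw [hNapp]
    by_cases h : i = j
    · subst h
      rw [if_pos rfl, mul_one]
      have h1 : L i i ≤ ∑ k, L k k :=
        Finset.single_le_sum (fun k _ => hLdiag_nn k) (Finset.mem_univ i)
      rw [hc]
      nlinarith
    · simp only [if_neg h, mul_zero, add_zero, hLoff i j h]
      nlinarith [hA i j]
  have hNedge : ∀ u v, 0 < A u v → 0 < N u v := by
    intro u v huv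
    have hne' : u ≠ v := by
      rintro rfl; rw [hdiag] at huv; exact lt_irrefl 0 huv
    rw [hNapp, if_neg hne', mul_zero, add_zero, hLoff u v hne']
    nlinarith
  have hNpath : ∀ i j, i ≠ j → ∃ m : ℕ, 0 < (N ^ m) i j := fun i j h =>
    pow_path_pos hNnn (Relation.TransGen.mono (fun u v huv => hNedge u v huv) _ _ (hSC i j h))
  have hexpNpos : ∀ i j, 0 < exp N i j := exp_entry_pos hNnn hNpath
  -- the semigroup P
  set P : ℝ → Matrix (Fin n) (Fin n) ℝ := fun τ => exp (τ • B) with hPdef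
  have hPsplit : ∀ τ : ℝ, P τ = Real.exp (-(τ * c)) • exp (τ • N) := by
    intro τ
    have h1 : τ • B = τ • N + (-(τ * c)) • (1 : Matrix (Fin n) (Fin n) ℝ) := by
      rw [hN, smul_add, smul_smul τ c, add_assoc, ← add_smul]
      simp
    rw [hPdef]
    simp only [h1, exp_add_smul_one]
  have hPnn : ∀ τ : ℝ, 0 ≤ τ → ∀ i j, 0 ≤ P τ i j := by
    intro τ hτ i j
    rw [hPsplit]
    have : ∀ a b, 0 ≤ (τ • N) a b := fun a b => by
      rw [Matrix.smul_apply, smul_eq_mul]; exact mul_nonneg hτ (hNnn a b)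
    have h2 := exp_entry_nonneg this i j
    simp only [Matrix.smul_apply, smul_eq_mul]
    positivity
  have hP1pos : ∀ i j, 0 < P 1 i j := by
    intro i j
    rw [hPsplit]
    simp only [one_smul, Matrix.smul_apply, smul_eq_mul]
    exact mul_pos (Real.exp_pos _) (hexpNpos i j)
  have hProw : ∀ τ : ℝ, ∀ i, ∑ j, P τ i j = 1 := by
    intro τ i
    have h0 : (τ • B) *ᵥ (fun _ => (1:ℝ)) = 0 := by
      rw [Matrix.smul_mulVec, hBvec1, smul_zero]
    have h1 : P τ *ᵥ (fun _ => (1:ℝ)) = fun _ => (1:ℝ) :=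
      exp_mulVec_of_mulVec_eq_zero h0
    have h2 := congrFun h1 i
    simpa [Matrix.mulVec, dotProduct] using h2
  have hsemi : ∀ s τ : ℝ, P (τ + s) = P τ * P s := by
    intro s τ
    rw [hPdef]
    simp only [add_smul]
    exact exp_add_of_commute (((Commute.refl B).smul_left τ).smul_right s)
  -- step relation
  have hstep : ∀ s t : ℝ, 0 ≤ s → s ≤ t → x t = P (t - s) *ᵥ x s := by
    intro s t hs hst
    have h1 : x t = P t *ᵥ x 0 := hxf t (le_trans hs hst)
    have h2 : P t = P (t - s) * P s := by
      rw [← hsemi s (t - s), sub_add_cancel]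
    rw [h1, h2, ← Matrix.mulVec_mulVec, ← hxf s hs]
  -- sup and inf
  set F : ℝ → ℝ := fun t => Finset.univ.sup' hne (x t) with hF
  set G : ℝ → ℝ := fun t => Finset.univ.inf' hne (x t) with hG
  have hGF : ∀ t, G t ≤ F t := by
    intro t
    obtain ⟨a, _, ha⟩ := Finset.exists_mem_eq_inf' hne (x t)
    rw [hG]
    simp only []
    rw [ha]
    exact Finset.le_sup' (x t) (Finset.mem_univ a)
  have hxF : ∀ t j, x t j ≤ F t := fun t j => Finset.le_sup' (x t) (Finset.mem_univ j)
  have hxG : ∀ t j, G t ≤ x t j := fun t j => Finset.inf'_le (x t) (Finset.mem_univ j)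
  have hmono : ∀ s t : ℝ, 0 ≤ s → s ≤ t → F t ≤ F s ∧ G s ≤ G t := by
    intro s t hs hst
    have hb := fun i => stoch_bounds hne (P (t - s)) 0 le_rfl
      (fun a b => by simpa using hPnn (t - s) (by linarith) a b)
      (hProw (t - s)) (x s) i
    have hxts : ∀ i, x t i = (P (t - s) *ᵥ x s) i := fun i => by
      rw [hstep s t hs hst]
    constructor
    · show Finset.univ.sup' hne (x t) ≤ F s
      refine Finset.sup'_le hne _ fun i _ => ?_
      rw [hxts i]
      have h := (hb i).2
      rw [zero_mul, sub_zero] at h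
      exact h
    · show G s ≤ Finset.univ.inf' hne (x t)
      refine Finset.le_inf' hne _ fun i _ => ?_
      rw [hxts i]
      have h := (hb i).1
      rw [zero_mul, add_zero] at h
      exact h
  -- contraction constant
  set δ0 : ℝ := Finset.univ.inf' hne fun i => Finset.univ.inf' hne fun j => P 1 i j with hδ0
  have hδ0pos : 0 < δ0 := by
    rw [hδ0, Finset.lt_inf'_iff]
    intro i _
    rw [Finset.lt_inf'_iff]
    exact fun j _ => hP1pos i j
  have hδ0le : ∀ i j, δ0 ≤ P 1 i j := by
    intro i j
    refine le_trans (Finset.inf'_le _ (Finset.mem_univ i)) ?_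
    exact Finset.inf'_le _ (Finset.mem_univ j)
  have hcontr : ∀ t : ℝ, 0 ≤ t → F (t+1) - G (t+1) ≤ (1 - 2*δ0) * (F t - G t) := by
    intro t ht
    have hxt1 : x (t+1) = P 1 *ᵥ x t := by
      have := hstep t (t+1) ht (by linarith)
      simpa using this
    have hb := fun i => stoch_bounds hne (P 1) δ0 (le_of_lt hδ0pos) hδ0le (hProw 1) (x t) i
    have hxts : ∀ i, x (t+1) i = (P 1 *ᵥ x t) i := fun i => by rw [hxt1]
    have hFub : F (t+1) ≤ F t - δ0 * (F t - G t) := by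
      show Finset.univ.sup' hne (x (t+1)) ≤ _
      refine Finset.sup'_le hne _ fun i _ => ?_
      rw [hxts i]
      exact (hb i).2
    have hGlb : G t + δ0 * (F t - G t) ≤ G (t+1) := by
      show _ ≤ Finset.univ.inf' hne (x (t+1))
      refine Finset.le_inf' hne _ fun i _ => ?_
      rw [hxts i]
      exact (hb i).1
    linarith
  set q : ℝ := max (1 - 2*δ0) 0 with hq
  have hq0 : 0 ≤ q := le_max_right _ _
  have hq1 : q < 1 := max_lt (by linarith) one_pos
  have hosc_nn : ∀ t, 0 ≤ F t - G t := fun t => by linarith [hGF t]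
  have hosck : ∀ k : ℕ, F k - G k ≤ q ^ k * (F 0 - G 0) := by
    intro k
    induction k with
    | zero => simp
    | succ m ih =>
      have h1 : F ((m:ℝ)+1) - G ((m:ℝ)+1) ≤ (1 - 2*δ0) * (F m - G m) :=
        hcontr m (Nat.cast_nonneg m)
      have h2 : (1 - 2*δ0) * (F m - G m) ≤ q * (F m - G m) :=
        mul_le_mul_of_nonneg_right (le_max_left _ _) (hosc_nn m)
      have h3 : q * (F m - G m) ≤ q * (q ^ m * (F 0 - G 0)) :=
        mul_le_mul_of_nonneg_left ih hq0
      have hcast : ((m+1 : ℕ) : ℝ) = (m:ℝ) + 1 := by push_cast; ring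
      rw [hcast, pow_succ]
      nlinarith
  -- invariance of the weighted sum
  have hξk : ∀ k, ∑ j, ξ j * L j k = 0 := by
    intro k
    have := congrFun hξ k
    simpa [Matrix.vecMul, dotProduct] using this
  have hconst : ∀ t : ℝ, 0 ≤ t → ∑ j, ξ j * x t j = ∑ j, ξ j * x 0 j := by
    intro t ht
    have hf' : ∀ s ∈ Set.Ici (0:ℝ),
        HasDerivWithinAt (fun u => ∑ j, ξ j * x u j) 0 (Set.Ici (0:ℝ)) s := by
      intro s hs
      have hsum : HasDerivWithinAt (fun u => ∑ j, ξ j * x u j)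
          (∑ j, ξ j * (-α * ∑ k, L j k * x s k)) (Set.Ici (0:ℝ)) s :=
        HasDerivWithinAt.fun_sum fun j _ => (hode j s hs).const_mul (ξ j)
      have hzero : ∑ j, ξ j * (-α * ∑ k, L j k * x s k) = 0 := by
        have e1 : ∀ j, ξ j * (-α * ∑ k, L j k * x s k)
            = ∑ k, (-α * x s k) * (ξ j * L j k) := by
          intro j
          rw [Finset.mul_sum, Finset.mul_sum]
          exact Finset.sum_congr rfl fun k _ => by ring
        rw [Finset.sum_congr rfl fun j _ => e1 j, Finset.sum_comm]
        refine Finset.sum_eq_zero fun k _ => ?_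
        rw [← Finset.mul_sum, hξk k, mul_zero]
      rwa [hzero] at hsum
    have hcont : ContinuousOn (fun u => ∑ j, ξ j * x u j) (Set.Icc 0 t) :=
      fun s hs => ((hf' s hs.1).continuousWithinAt).mono fun u hu => hu.1
    have := constant_of_has_deriv_right_zero hcont
      (fun s hs => (hf' s hs.1).mono (Set.Ici_subset_Ici.mpr hs.1)) t
      ⟨ht, le_refl t⟩
    exact this
  set c0 : ℝ := ∑ j, ξ j * x 0 j with hc0
  -- pointwise bound
  have hptw : ∀ t : ℝ, 0 ≤ t → |x t i0 - c0| ≤ F t - G t := by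
    intro t ht
    have h1 : c0 = ∑ j, ξ j * x t j := (hconst t ht).symm
    have hub : ∑ j, ξ j * x t j ≤ F t := by
      calc ∑ j, ξ j * x t j ≤ ∑ j, ξ j * F t :=
            Finset.sum_le_sum fun j _ =>
              mul_le_mul_of_nonneg_left (hxF t j) (le_of_lt (hξpos j))
        _ = F t := by rw [← Finset.sum_mul, hξsum, one_mul]
    have hlb : G t ≤ ∑ j, ξ j * x t j := by
      calc G t = ∑ j, ξ j * G t := by rw [← Finset.sum_mul, hξsum, one_mul]
        _ ≤ ∑ j, ξ j * x t j :=
            Finset.sum_le_sum fun j _ =>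
              mul_le_mul_of_nonneg_left (hxG t j) (le_of_lt (hξpos j))
    rw [abs_le]
    constructor
    · have h2 := hxG t i0
      rw [h1]
      linarith
    · have h2 := hxF t i0
      rw [h1]
      linarith
  -- the final squeeze
  have hbound : ∀ t : ℝ, 0 ≤ t → |x t i0 - c0| ≤ q ^ ⌊t⌋₊ * (F 0 - G 0) := by
    intro t ht
    have hfl : (⌊t⌋₊ : ℝ) ≤ t := Nat.floor_le ht
    have hfl0 : (0:ℝ) ≤ (⌊t⌋₊ : ℝ) := Nat.cast_nonneg _
    have hm := hmono (⌊t⌋₊ : ℝ) t hfl0 hfl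
    have := hosck ⌊t⌋₊
    have hp := hptw t ht
    linarith [hm.1, hm.2]
  have hzero : Filter.Tendsto (fun t : ℝ => q ^ ⌊t⌋₊ * (F 0 - G 0)) Filter.atTop (nhds 0) := by
    have h1 : Filter.Tendsto (fun k : ℕ => q ^ k) Filter.atTop (nhds 0) :=
      tendsto_pow_atTop_nhds_zero_of_lt_one hq0 hq1
    have h2 : Filter.Tendsto (fun t : ℝ => q ^ ⌊t⌋₊) Filter.atTop (nhds 0) :=
      h1.comp tendsto_nat_floor_atTop
    simpa using h2.mul_const (F 0 - G 0)
  have hsq : Filter.Tendsto (fun t : ℝ => x t i0 - c0) Filter.atTop (nhds 0) := by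
    refine squeeze_zero_norm' ?_ hzero
    filter_upwards [Filter.eventually_ge_atTop (0:ℝ)] with t ht
    simpa [Real.norm_eq_abs] using hbound t ht
  have := hsq.add_const c0
  simpa using this
end

section
/- (Exponential consensus under a sector-bounded nonlinearity) Suppose the weighted digraph G on n nodes is strongly connected with Laplacian L, and let h : ℝ → ℝ be continuous with h(0) = 0 and satisfy (h(w_1) − h(w_2))/(w_1 − w_2) ≥ α for some α > 0 and all w_1 ≠ w_2. Then every solution of ẋ_i(t) = −∑_{j=1}^n l_ij h(x_j(t)) converges to consensus exponentially: there exist constants C ≥ 0 and λ > 0 (depending on L, α, and x(0)) such that |x_i(t) − x_ξ| ≤ C e^{−λ t} for all i and all t ≥ 0, where x_ξ = ∑_{j=1}^n ξ_j x_j(0) and ξ is the normalized positive left eigenvector of L for the eigenvalue 0. -/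
open Matrix BigOperators

private lemma chain_abs_sub_le {β : Type*} (r : β → β → Prop) (g : β → ℝ) (B : ℝ)
    (hB : ∀ u v, r u v → |g u - g v| ≤ B) :
    ∀ (l : List β) (a : β), List.Chain r a l →
      |g a - g ((a :: l).getLast (List.cons_ne_nil _ _))| ≤ l.length * B := by
  intro l
  induction l with
  | nil => intro a _; simp
  | cons b l ih =>
      intro a hc
      rw [List.Chain, List.chain_cons] at hc
      have h1 := hB a b hc.1
      have h2 := ih b hc.2
      rw [List.getLast_cons_cons]
      calc |g a - g ((b :: l).getLast (List.cons_ne_nil _ _))|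
          ≤ |g a - g b| + |g b - g ((b :: l).getLast (List.cons_ne_nil _ _))| :=
            abs_sub_le _ _ _
        _ ≤ B + l.length * B := add_le_add h1 h2
        _ = (b :: l).length * B := by
            simp only [List.length_cons]
            push_cast
            ring

private lemma laplacian_quad (n : ℕ) (A : Matrix (Fin n) (Fin n) ℝ)
    (hdiag : ∀ i, A i i = 0)
    (L : Matrix (Fin n) (Fin n) ℝ)
    (hL : ∀ i j, L i j = if i = j then ∑ k ∈ Finset.univ.erase i, A i k else -A i j)
    (ξ : Fin n → ℝ) (hbal : ∀ j, ∑ i, ξ i * L i j = 0)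
    (g : Fin n → ℝ) (c : ℝ) :
    ∑ i, ξ i * ((g i - c) * (∑ j, L i j * g j))
      = (1/2) * ∑ i, ∑ j, ξ i * A i j * (g i - g j)^2 := by
  have hrow : ∀ i, (∑ j, L i j * g j) = ∑ j, A i j * (g i - g j) := by
    intro i
    rw [← Finset.add_sum_erase _ (fun j => L i j * g j) (Finset.mem_univ i),
        ← Finset.add_sum_erase _ (fun j => A i j * (g i - g j)) (Finset.mem_univ i)]
    have hLii : L i i = ∑ k ∈ Finset.univ.erase i, A i k := by rw [hL i i, if_pos rfl]
    have e1 : ∑ j ∈ Finset.univ.erase i, L i j * g j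
        = -∑ j ∈ Finset.univ.erase i, A i j * g j := by
      rw [← Finset.sum_neg_distrib]
      refine Finset.sum_congr rfl fun j hj => ?_
      have hij : i ≠ j := fun e => (Finset.mem_erase.1 hj).1 e.symm
      rw [hL i j, if_neg hij]; ring
    have e2 : ∑ j ∈ Finset.univ.erase i, A i j * (g i - g j)
        = (∑ j ∈ Finset.univ.erase i, A i j) * g i
            - ∑ j ∈ Finset.univ.erase i, A i j * g j := by
      rw [Finset.sum_mul, ← Finset.sum_sub_distrib]
      exact Finset.sum_congr rfl fun j _ => by ring
    rw [e1, e2, hLii, hdiag i]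
    ring
  have hb : ∀ φ : Fin n → ℝ, ∑ i, ∑ j, ξ i * A i j * φ j = ∑ i, ∑ j, ξ i * A i j * φ i := by
    intro φ
    have hcol : ∀ j, ∑ i, ξ i * A i j = ξ j * ∑ k, A j k := by
      intro j
      have h0 := hbal j
      rw [← Finset.add_sum_erase _ (fun i => ξ i * L i j) (Finset.mem_univ j)] at h0
      have hLjj : L j j = ∑ k ∈ Finset.univ.erase j, A j k := by rw [hL j j, if_pos rfl]
      have e1 : ∑ i ∈ Finset.univ.erase j, ξ i * L i j
          = -∑ i ∈ Finset.univ.erase j, ξ i * A i j := by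
        rw [← Finset.sum_neg_distrib]
        refine Finset.sum_congr rfl fun i hi => ?_
        have hij : i ≠ j := (Finset.mem_erase.1 hi).1
        rw [hL i j, if_neg hij]; ring
      rw [hLjj, e1] at h0
      have e2 : ∑ i, ξ i * A i j = ∑ i ∈ Finset.univ.erase j, ξ i * A i j := by
        rw [← Finset.add_sum_erase _ (fun i => ξ i * A i j) (Finset.mem_univ j), hdiag j]
        ring
      have e3 : ∑ k, A j k = ∑ k ∈ Finset.univ.erase j, A j k := by
        rw [← Finset.add_sum_erase _ (fun k => A j k) (Finset.mem_univ j), hdiag j]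
        ring
      rw [e2, e3]
      linarith
    calc ∑ i, ∑ j, ξ i * A i j * φ j = ∑ j, ∑ i, ξ i * A i j * φ j := Finset.sum_comm
      _ = ∑ j, (∑ i, ξ i * A i j) * φ j := by
          exact Finset.sum_congr rfl fun j _ => (Finset.sum_mul _ _ _).symm
      _ = ∑ j, (ξ j * ∑ k, A j k) * φ j := by
          exact Finset.sum_congr rfl fun j _ => by rw [hcol j]
      _ = ∑ j, ∑ k, ξ j * A j k * φ j := by
          refine Finset.sum_congr rfl fun j _ => ?_
          rw [Finset.mul_sum, Finset.sum_mul]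
      _ = ∑ i, ∑ j, ξ i * A i j * φ i := rfl
  have lhs_eq : ∑ i, ξ i * ((g i - c) * (∑ j, L i j * g j))
      = ∑ i, ∑ j, ξ i * A i j * ((g i - c) * (g i - g j)) := by
    refine Finset.sum_congr rfl fun i _ => ?_
    rw [hrow i, Finset.mul_sum, Finset.mul_sum]
    exact Finset.sum_congr rfl fun j _ => by ring
  rw [lhs_eq]
  have e1 : ∑ i, ∑ j, ξ i * A i j * (g j)^2 = ∑ i, ∑ j, ξ i * A i j * (g i)^2 :=
    hb (fun u => (g u)^2)
  have e2 : ∑ i, ∑ j, ξ i * A i j * (g j) = ∑ i, ∑ j, ξ i * A i j * (g i) := hb g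
  have main : ∑ i, ∑ j, (ξ i * A i j * ((g i - c) * (g i - g j))
        - (1/2) * (ξ i * A i j * (g i - g j)^2))
      = ∑ i, ∑ j, ((1/2) * (ξ i * A i j * (g i)^2) - (1/2) * (ξ i * A i j * (g j)^2)
        + (c * (ξ i * A i j * (g j)) - c * (ξ i * A i j * (g i)))) :=
    Finset.sum_congr rfl fun i _ => Finset.sum_congr rfl fun j _ => by ring
  have lhs_split : ∑ i, ∑ j, (ξ i * A i j * ((g i - c) * (g i - g j))
        - (1/2) * (ξ i * A i j * (g i - g j)^2))
      = (∑ i, ∑ j, ξ i * A i j * ((g i - c) * (g i - g j)))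
        - (1/2) * ∑ i, ∑ j, ξ i * A i j * (g i - g j)^2 := by
    simp only [Finset.sum_sub_distrib, ← Finset.mul_sum]
  have rhs_split : ∑ i, ∑ j, ((1/2) * (ξ i * A i j * (g i)^2) - (1/2) * (ξ i * A i j * (g j)^2)
        + (c * (ξ i * A i j * (g j)) - c * (ξ i * A i j * (g i))))
      = ((1/2) * (∑ i, ∑ j, ξ i * A i j * (g i)^2)
          - (1/2) * (∑ i, ∑ j, ξ i * A i j * (g j)^2))
        + (c * (∑ i, ∑ j, ξ i * A i j * (g j))
          - c * (∑ i, ∑ j, ξ i * A i j * (g i))) := by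
    simp only [Finset.sum_add_distrib, Finset.sum_sub_distrib, ← Finset.mul_sum]
  rw [lhs_split, rhs_split, e1, e2] at main
  linarith


private lemma base_integral (α c u : ℝ) :
    (∫ v in c..u, α * (v - c)) = α/2 * (u - c)^2 := by
  rw [intervalIntegral.integral_const_mul]
  have e : (∫ v in c..u, (v - c)) = ∫ v in (c - c)..(u - c), v := by
    exact intervalIntegral.integral_comp_sub_right (fun v => v) c
  rw [e, integral_id]
  ring

private lemma H_lower (h : ℝ → ℝ) (hcont : Continuous h) (α : ℝ)
    (hm : ∀ w₁ w₂ : ℝ, w₂ ≤ w₁ → α * (w₁ - w₂) ≤ h w₁ - h w₂) (c u : ℝ) :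
    α/2 * (u - c)^2 ≤ ∫ v in c..u, (h v - h c) := by
  have hint1 : ∀ a b : ℝ, IntervalIntegrable (fun v => h v - h c) MeasureTheory.volume a b :=
    fun a b => (hcont.sub continuous_const).intervalIntegrable a b
  have hint2 : ∀ a b : ℝ, IntervalIntegrable (fun v => α * (v - c)) MeasureTheory.volume a b :=
    fun a b => (continuous_const.mul (continuous_id.sub continuous_const)).intervalIntegrable a b
  rcases le_total c u with hcu | huc
  · rw [← base_integral α c u]
    exact intervalIntegral.integral_mono_on hcu (hint2 c u) (hint1 c u)
      (fun v hv => by have := hm v c hv.1; linarith)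
  · have h1 : (∫ v in u..c, (h v - h c)) ≤ ∫ v in u..c, α * (v - c) :=
      intervalIntegral.integral_mono_on huc (hint1 u c) (hint2 u c)
        (fun v hv => by have := hm c v hv.2; linarith)
    have e1 : (∫ v in c..u, (h v - h c)) = -(∫ v in u..c, (h v - h c)) :=
      intervalIntegral.integral_symm u c
    have e2 : (∫ v in c..u, α * (v - c)) = -(∫ v in u..c, α * (v - c)) :=
      intervalIntegral.integral_symm u c
    have := base_integral α c u
    linarith

private lemma H_upper (h : ℝ → ℝ) (hcont : Continuous h) (α : ℝ) (hα : 0 < α)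
    (hm : ∀ w₁ w₂ : ℝ, w₂ ≤ w₁ → α * (w₁ - w₂) ≤ h w₁ - h w₂) (c u : ℝ) :
    (∫ v in c..u, (h v - h c)) ≤ (h u - h c)^2 / α := by
  have hint1 : ∀ a b : ℝ, IntervalIntegrable (fun v => h v - h c) MeasureTheory.volume a b :=
    fun a b => (hcont.sub continuous_const).intervalIntegrable a b
  rcases le_total c u with hcu | huc
  · have h1 : (∫ v in c..u, (h v - h c)) ≤ ∫ v in c..u, (h u - h c) :=
      intervalIntegral.integral_mono_on hcu (hint1 c u) (intervalIntegrable_const)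
        (fun v hv => by
          have h2 := hm u v hv.2
          have h3 : 0 ≤ α * (u - v) := mul_nonneg (le_of_lt hα) (by linarith [hv.2])
          linarith)
    rw [intervalIntegral.integral_const, smul_eq_mul] at h1
    have h2 : α * (u - c) ≤ h u - h c := hm u c hcu
    have hq : 0 ≤ h u - h c := le_trans (mul_nonneg hα.le (by linarith)) h2
    have h3 : (u - c) * (h u - h c) ≤ (h u - h c)^2 / α := by
      rw [le_div_iff₀ hα]
      nlinarith
    linarith
  · have h1 : (∫ v in u..c, (h u - h c)) ≤ ∫ v in u..c, (h v - h c) :=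
      intervalIntegral.integral_mono_on huc (intervalIntegrable_const) (hint1 u c)
        (fun v hv => by
          have h2 := hm v u hv.1
          have h3 : 0 ≤ α * (v - u) := mul_nonneg (le_of_lt hα) (by linarith [hv.1])
          linarith)
    rw [intervalIntegral.integral_const, smul_eq_mul] at h1
    have e1 : (∫ v in c..u, (h v - h c)) = -(∫ v in u..c, (h v - h c)) :=
      intervalIntegral.integral_symm u c
    have h2 : α * (c - u) ≤ h c - h u := hm c u huc
    have hq : 0 ≤ h c - h u := le_trans (mul_nonneg hα.le (by linarith)) h2
    have h3 : (c - u) * (h c - h u) ≤ (h u - h c)^2 / α := by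
      rw [le_div_iff₀ hα]
      nlinarith
    linarith

/-- Exponential consensus under a sector-bounded nonlinearity:
On a strongly connected weighted digraph with Laplacian `L`, if `h` is
continuous with `h(0) = 0` and satisfies the sector condition
`(h(w₁) - h(w₂))/(w₁ - w₂) ≥ α > 0`, then every solution of
`ẋ_i = -∑_j l_ij h(x_j)` converges to the consensus value
`x_ξ = ∑ j, ξ_j x_j(0)` exponentially fast. -/
theorem exponential_consensus_sector
    (n : ℕ) (A : Matrix (Fin n) (Fin n) ℝ)
    (hA : ∀ i j, 0 ≤ A i j) (hdiag : ∀ i, A i i = 0)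
    (hSC : ∀ i j : Fin n, i ≠ j → Relation.TransGen (fun u v => 0 < A u v) i j)
    (L : Matrix (Fin n) (Fin n) ℝ)
    (hL : ∀ i j, L i j = if i = j then ∑ k ∈ Finset.univ.erase i, A i k else -A i j)
    (ξ : Fin n → ℝ) (hξpos : ∀ i, 0 < ξ i) (hξsum : ∑ i, ξ i = 1)
    (hξ : ξ ᵥ* L = 0)
    (h : ℝ → ℝ) (hcont : Continuous h) (h0 : h 0 = 0)
    (α : ℝ) (hα : 0 < α)
    (hsector : ∀ w₁ w₂ : ℝ, w₁ ≠ w₂ → α ≤ (h w₁ - h w₂) / (w₁ - w₂))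
    (x : ℝ → Fin n → ℝ)
    (hode : ∀ i, ∀ t ∈ Set.Ici (0 : ℝ),
      HasDerivWithinAt (fun s => x s i) (-∑ j, L i j * h (x t j)) (Set.Ici (0 : ℝ)) t) :
    ∃ C : ℝ, 0 ≤ C ∧ ∃ lam : ℝ, 0 < lam ∧
      ∀ i, ∀ t ∈ Set.Ici (0 : ℝ),
        |x t i - ∑ j, ξ j * x 0 j| ≤ C * Real.exp (-lam * t) := by
  classical
  -- basic facts
  have hn : Nonempty (Fin n) := by
    rcases Nat.eq_zero_or_pos n with h0' | h0'
    · subst h0'; simp at hξsum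
    · exact ⟨⟨0, h0'⟩⟩
  have hmono : ∀ w₁ w₂ : ℝ, w₂ ≤ w₁ → α * (w₁ - w₂) ≤ h w₁ - h w₂ := by
    intro w₁ w₂ hle
    rcases eq_or_lt_of_le hle with he | hlt
    · rw [← he]; simp
    · have hs := hsector w₁ w₂ (ne_of_gt hlt)
      rw [le_div_iff₀ (by linarith)] at hs
      linarith
  have hbal : ∀ j, ∑ i, ξ i * L i j = 0 := by
    intro j
    have := congrFun hξ j
    simpa [Matrix.vecMul, dotProduct] using this
  set s0 : ℝ := ∑ j, ξ j * x 0 j with hs0def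
  -- minimum of ξ
  obtain ⟨i₀, -, hi₀⟩ := Finset.exists_min_image Finset.univ ξ Finset.univ_nonempty
  set ξm : ℝ := ξ i₀ with hξmdef
  have hξm : 0 < ξm := hξpos i₀
  have hξmle : ∀ i, ξm ≤ ξ i := fun i => hi₀ i (Finset.mem_univ i)
  -- minimum positive weight
  obtain ⟨am, ham0, hamle⟩ : ∃ am : ℝ, 0 < am ∧ ∀ u v : Fin n, 0 < A u v → am ≤ A u v := by
    by_cases hS : (Finset.univ.filter fun q : Fin n × Fin n => 0 < A q.1 q.2).Nonempty
    · refine ⟨Finset.inf' _ hS (fun q => A q.1 q.2), ?_, ?_⟩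
      · rw [Finset.lt_inf'_iff]
        intro q hq
        exact (Finset.mem_filter.1 hq).2
      · intro u v huv
        exact Finset.inf'_le (fun q : Fin n × Fin n => A q.1 q.2)
          (Finset.mem_filter.2 ⟨Finset.mem_univ (u, v), huv⟩)
    · refine ⟨1, one_pos, fun u v huv => absurd ?_ hS⟩
      exact ⟨(u, v), Finset.mem_filter.2 ⟨Finset.mem_univ _, huv⟩⟩
  set m : ℝ := ξm * am with hmdef
  have hm0 : 0 < m := mul_pos hξm ham0
  -- chains
  have hex : ∀ q : Fin n × Fin n, ∃ l : List (Fin n),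
      List.Chain (fun u v => 0 < A u v) q.1 l ∧
      (q.1 :: l).getLast (List.cons_ne_nil _ _) = q.2 := by
    rintro ⟨i, p⟩
    by_cases hip : i = p
    · exact ⟨[], List.Chain.nil, by simp [hip]⟩
    · exact List.exists_isChain_cons_of_relationReflTransGen ((hSC i p hip).to_reflTransGen)
  choose ch hch1 hch2 using hex
  set N : ℕ := Finset.univ.sup fun q : Fin n × Fin n => (ch q).length with hNdef
  have hchlen : ∀ q, (ch q).length ≤ N :=
    fun q => Finset.le_sup (f := fun q => (ch q).length) (Finset.mem_univ q)
  set Nr : ℝ := (N : ℝ) + 1 with hNrdef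
  have hNr : 0 < Nr := by positivity
  -- Dirichlet energy
  set D : ℝ → ℝ := fun t => ∑ i, ∑ j, ξ i * A i j * (h (x t i) - h (x t j))^2 with hDdef
  have hD0 : ∀ t, 0 ≤ D t := by
    intro t
    refine Finset.sum_nonneg fun i _ => Finset.sum_nonneg fun j _ => ?_
    have := mul_nonneg (hξpos i).le (hA i j)
    positivity
  -- continuity of the solution
  have hxc : ∀ i, ContinuousOn (fun s => x s i) (Set.Ici (0:ℝ)) :=
    fun i t ht => (hode i t ht).continuousWithinAt
  -- conservation of the weighted average
  set σ : ℝ → ℝ := fun t => ∑ i, ξ i * x t i with hσdef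
  have hσc : ContinuousOn σ (Set.Ici (0:ℝ)) := by
    apply continuousOn_finset_sum
    intro i _
    exact continuousOn_const.mul (hxc i)
  have hσ' : ∀ t ∈ Set.Ici (0:ℝ), HasDerivWithinAt σ 0 (Set.Ici (0:ℝ)) t := by
    intro t ht
    have hd : HasDerivWithinAt σ (∑ i, ξ i * (-∑ j, L i j * h (x t j)))
        (Set.Ici (0:ℝ)) t :=
      HasDerivWithinAt.fun_sum fun i _ => HasDerivWithinAt.const_mul (ξ i) (hode i t ht)
    have hzero : ∑ i, ξ i * (-∑ j, L i j * h (x t j)) = 0 := by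
      calc ∑ i, ξ i * (-∑ j, L i j * h (x t j))
          = ∑ i, ∑ j, -(ξ i * L i j * h (x t j)) := by
            refine Finset.sum_congr rfl fun i _ => ?_
            rw [mul_neg, Finset.mul_sum, ← Finset.sum_neg_distrib]
            exact Finset.sum_congr rfl fun j _ => by ring
        _ = ∑ j, ∑ i, -(ξ i * L i j * h (x t j)) := Finset.sum_comm
        _ = ∑ j, -((∑ i, ξ i * L i j) * h (x t j)) := by
            refine Finset.sum_congr rfl fun j _ => ?_
            rw [Finset.sum_mul, ← Finset.sum_neg_distrib]
        _ = 0 := by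
            refine Finset.sum_eq_zero fun j _ => ?_
            rw [hbal j]; ring
    rwa [hzero] at hd
  have hσconst : ∀ t ∈ Set.Ici (0:ℝ), σ t = σ 0 := by
    intro t ht
    have := constant_of_has_deriv_right_zero (f := σ) (a := 0) (b := t)
      (hσc.mono (Set.Icc_subset_Ici_self))
      (fun s hs => (hσ' s hs.1).mono (Set.Ici_subset_Ici.2 hs.1))
    exact this t ⟨ht, le_rfl⟩
  have hconsv : ∀ t ∈ Set.Ici (0:ℝ), ∑ i, ξ i * (x t i - s0) = 0 := by
    intro t ht
    have e : ∑ i, ξ i * (x t i - s0) = σ t - (∑ i, ξ i) * s0 := by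
      rw [Finset.sum_mul, ← Finset.sum_sub_distrib]
      exact Finset.sum_congr rfl fun i _ => by ring
    have e0 : σ 0 = s0 := rfl
    rw [e, hσconst t ht, e0, hξsum]
    ring
  -- key estimate: weighted square of centered h-values controlled by energy
  have hkey : ∀ t ∈ Set.Ici (0:ℝ),
      ∑ i, ξ i * (h (x t i) - h s0)^2 ≤ (Nr^2 / m) * D t := by
    intro t ht
    set B : ℝ := Real.sqrt (D t / m) with hBdef
    have hBnn : 0 ≤ B := Real.sqrt_nonneg _
    have hBedge : ∀ u v, 0 < A u v → |h (x t u) - h (x t v)| ≤ B := by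
      intro u v huv
      have h1 : ξ u * A u v * (h (x t u) - h (x t v))^2 ≤ D t := by
        calc ξ u * A u v * (h (x t u) - h (x t v))^2
            ≤ ∑ j, ξ u * A u j * (h (x t u) - h (x t j))^2 := by
              refine Finset.single_le_sum (f := fun j => ξ u * A u j * (h (x t u) - h (x t j))^2)
                (fun j _ => ?_) (Finset.mem_univ v)
              have := mul_nonneg (hξpos u).le (hA u j)
              positivity
          _ ≤ D t := by
              refine Finset.single_le_sum
                (f := fun i => ∑ j, ξ i * A i j * (h (x t i) - h (x t j))^2)
                (fun i _ => Finset.sum_nonneg fun j _ => ?_) (Finset.mem_univ u)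
              have := mul_nonneg (hξpos i).le (hA i j)
              positivity
      have h2 : m ≤ ξ u * A u v :=
        mul_le_mul (hξmle u) (hamle u v huv) ham0.le (hξpos u).le
      have h3 : (h (x t u) - h (x t v))^2 ≤ D t / m := by
        rw [le_div_iff₀ hm0]
        nlinarith [sq_nonneg (h (x t u) - h (x t v))]
      calc |h (x t u) - h (x t v)| = Real.sqrt ((h (x t u) - h (x t v))^2) :=
            (Real.sqrt_sq_eq_abs _).symm
        _ ≤ B := Real.sqrt_le_sqrt h3
    have hpair : ∀ i p : Fin n, |h (x t i) - h (x t p)| ≤ Nr * B := by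
      intro i p
      have hc := chain_abs_sub_le (fun u v => 0 < A u v) (fun u => h (x t u)) B hBedge
        (ch (i, p)) i (hch1 (i, p))
      rw [hch2 (i, p)] at hc
      refine hc.trans ?_
      have hlen : ((ch (i, p)).length : ℝ) ≤ Nr := by
        have h1' := hchlen (i, p)
        have h2' : ((ch (i, p)).length : ℝ) ≤ (N : ℝ) := Nat.cast_le.2 h1'
        rw [hNrdef]
        linarith
      exact mul_le_mul_of_nonneg_right hlen hBnn
    have hcons := hconsv t ht
    have hlo : ∃ p, x t p ≤ s0 := by
      by_contra hcon
      push_neg at hcon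
      have : 0 < ∑ i, ξ i * (x t i - s0) :=
        Finset.sum_pos (fun i _ => mul_pos (hξpos i) (by linarith [hcon i]))
          Finset.univ_nonempty
      linarith
    have hhi : ∃ q, s0 ≤ x t q := by
      by_contra hcon
      push_neg at hcon
      have h1 : 0 < ∑ i, ξ i * (s0 - x t i) :=
        Finset.sum_pos (fun i _ => mul_pos (hξpos i) (by linarith [hcon i]))
          Finset.univ_nonempty
      have h2 : ∑ i, ξ i * (s0 - x t i) = -∑ i, ξ i * (x t i - s0) := by
        rw [← Finset.sum_neg_distrib]
        exact Finset.sum_congr rfl fun i _ => by ring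
      rw [h2, hcons] at h1
      linarith
    obtain ⟨p, hp⟩ := hlo
    obtain ⟨q, hq⟩ := hhi
    have hgi : ∀ i, |h (x t i) - h s0| ≤ Nr * B := by
      intro i
      rcases le_total (x t i) s0 with hle | hge
      · have h1 : h (x t i) ≤ h s0 := by
          have h2 := hmono s0 (x t i) hle
          have h3 : 0 ≤ α * (s0 - x t i) := mul_nonneg hα.le (by linarith)
          linarith
        have h4 : h s0 ≤ h (x t q) := by
          have h5 := hmono (x t q) s0 hq
          have h6 : 0 ≤ α * (x t q - s0) := mul_nonneg hα.le (by linarith)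
          linarith
        have h7 : |h (x t i) - h s0| ≤ |h (x t i) - h (x t q)| := by
          rw [abs_of_nonpos (by linarith), abs_of_nonpos (by linarith)]
          linarith
        exact h7.trans (hpair i q)
      · have h1 : h s0 ≤ h (x t i) := by
          have h2 := hmono (x t i) s0 hge
          have h3 : 0 ≤ α * (x t i - s0) := mul_nonneg hα.le (by linarith)
          linarith
        have h4 : h (x t p) ≤ h s0 := by
          have h5 := hmono s0 (x t p) hp
          have h6 : 0 ≤ α * (s0 - x t p) := mul_nonneg hα.le (by linarith)
          linarith
        have h7 : |h (x t i) - h s0| ≤ |h (x t i) - h (x t p)| := by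
          rw [abs_of_nonneg (by linarith), abs_of_nonneg (by linarith)]
          linarith
        exact h7.trans (hpair i p)
    calc ∑ i, ξ i * (h (x t i) - h s0)^2
        ≤ ∑ i, ξ i * (Nr * B)^2 := by
          refine Finset.sum_le_sum fun i _ => ?_
          refine mul_le_mul_of_nonneg_left ?_ (hξpos i).le
          calc (h (x t i) - h s0)^2 = |h (x t i) - h s0|^2 := (sq_abs _).symm
            _ ≤ (Nr * B)^2 := pow_le_pow_left₀ (abs_nonneg _) (hgi i) 2
      _ = (Nr * B)^2 := by rw [← Finset.sum_mul, hξsum, one_mul]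
      _ = Nr^2 * (D t / m) := by
          rw [mul_pow, hBdef, Real.sq_sqrt (div_nonneg (hD0 t) hm0.le)]
      _ = (Nr^2 / m) * D t := by ring
  -- the Lyapunov function
  set H : ℝ → ℝ := fun u => ∫ v in s0..u, (h v - h s0) with hHdef
  have hHder : ∀ u, HasDerivAt H (h u - h s0) u := by
    intro u
    exact intervalIntegral.integral_hasDerivAt_right
      ((hcont.sub continuous_const).intervalIntegrable _ _)
      ((hcont.sub continuous_const).stronglyMeasurable.stronglyMeasurableAtFilter)
      ((hcont.sub continuous_const).continuousAt)
  have hHcont : Continuous H := by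
    rw [continuous_iff_continuousAt]
    exact fun u => (hHder u).continuousAt
  have hHlow : ∀ u, α/2 * (u - s0)^2 ≤ H u := fun u => H_lower h hcont α hmono s0 u
  have hHup : ∀ u, H u ≤ (h u - h s0)^2 / α := fun u => H_upper h hcont α hα hmono s0 u
  have hH0 : ∀ u, 0 ≤ H u := fun u => le_trans (by positivity) (hHlow u)
  set V : ℝ → ℝ := fun t => ∑ i, ξ i * H (x t i) with hVdef
  have hV0 : ∀ t, 0 ≤ V t :=
    fun t => Finset.sum_nonneg fun i _ => mul_nonneg (hξpos i).le (hH0 _)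
  have hVc : ContinuousOn V (Set.Ici (0:ℝ)) := by
    apply continuousOn_finset_sum
    intro i _
    exact continuousOn_const.mul (hHcont.comp_continuousOn (hxc i))
  have hV' : ∀ t ∈ Set.Ici (0:ℝ),
      HasDerivWithinAt V (-((1/2) * D t)) (Set.Ici (0:ℝ)) t := by
    intro t ht
    have hd : HasDerivWithinAt V
        (∑ i, ξ i * ((h (x t i) - h s0) * (-∑ j, L i j * h (x t j))))
        (Set.Ici (0:ℝ)) t :=
      HasDerivWithinAt.fun_sum fun i _ =>
        HasDerivWithinAt.const_mul (ξ i)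
          ((hHder (x t i)).comp_hasDerivWithinAt t (hode i t ht) :
            HasDerivWithinAt (H ∘ fun s => x s i) _ _ _)
    have hiden : ∑ i, ξ i * ((h (x t i) - h s0) * (-∑ j, L i j * h (x t j)))
        = -((1/2) * D t) := by
      have e := laplacian_quad n A hdiag L hL ξ hbal (fun i => h (x t i)) (h s0)
      have e2 : ∑ i, ξ i * ((h (x t i) - h s0) * (-∑ j, L i j * h (x t j)))
          = -∑ i, ξ i * ((h (x t i) - h s0) * (∑ j, L i j * h (x t j))) := by
        rw [← Finset.sum_neg_distrib]
        exact Finset.sum_congr rfl fun i _ => by ring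
      rw [e2, e]
    rwa [hiden] at hd
  -- Gronwall
  set c1 : ℝ := Nr^2 / (α * m) with hc1def
  have hc1 : 0 < c1 := by positivity
  have hVup : ∀ t ∈ Set.Ici (0:ℝ), V t ≤ c1 * D t := by
    intro t ht
    calc V t ≤ ∑ i, ξ i * ((h (x t i) - h s0)^2 / α) :=
          Finset.sum_le_sum fun i _ => mul_le_mul_of_nonneg_left (hHup _) (hξpos i).le
      _ = (1/α) * ∑ i, ξ i * (h (x t i) - h s0)^2 := by
          rw [Finset.mul_sum]
          exact Finset.sum_congr rfl fun i _ => by ring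
      _ ≤ (1/α) * ((Nr^2 / m) * D t) :=
          mul_le_mul_of_nonneg_left (hkey t ht) (by positivity)
      _ = c1 * D t := by rw [hc1def]; ring
  set K : ℝ := -(1 / (2 * c1)) with hKdef
  have hK : K < 0 := by
    rw [hKdef]
    have : 0 < 1 / (2 * c1) := by positivity
    linarith
  clear_value s0 ξm m N Nr D σ H V c1 K
  have hgron : ∀ t ∈ Set.Ici (0:ℝ), V t ≤ V 0 * Real.exp (K * t) := by
    intro t ht
    have happ := le_gronwallBound_of_liminf_deriv_right_le
      (f := V) (f' := fun s => -((1/2) * D s)) (δ := V 0) (K := K) (ε := 0)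
      (a := 0) (b := t)
      (hVc.mono Set.Icc_subset_Ici_self)
      (fun s hs r hr => by
        have hder := (hV' s hs.1).mono (Set.Ici_subset_Ici.2 hs.1)
        exact hder.liminf_right_slope_le hr)
      le_rfl
      (fun s hs => by
        have h1 := hVup s hs.1
        have h2 : K * (c1 * D s) ≤ K * V s := mul_le_mul_of_nonpos_left h1 hK.le
        have h3 : K * (c1 * D s) = -((1/2) * D s) := by
          rw [hKdef]; field_simp
        show -((1/2) * D s) ≤ K * V s + 0
        linarith)
      t ⟨ht, le_rfl⟩
    rwa [gronwallBound_ε0, sub_zero] at happ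
  -- conclusion
  refine ⟨Real.sqrt (2 * V 0 / (α * ξm)), Real.sqrt_nonneg _, 1 / (4 * c1), by positivity, ?_⟩
  intro i t ht
  have hVt := hgron t ht
  have h1 : ξm * (α/2 * (x t i - s0)^2) ≤ V t := by
    calc ξm * (α/2 * (x t i - s0)^2) ≤ ξ i * H (x t i) := by
          have := hHlow (x t i)
          have h2 : ξm * (α/2 * (x t i - s0)^2) ≤ ξ i * (α/2 * (x t i - s0)^2) :=
            mul_le_mul_of_nonneg_right (hξmle i) (by positivity)
          exact h2.trans (mul_le_mul_of_nonneg_left this (hξpos i).le)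
      _ ≤ V t := by
            simp only [hVdef]
            exact Finset.single_le_sum (f := fun j => ξ j * H (x t j))
              (fun j _ => mul_nonneg (hξpos j).le (hH0 _)) (Finset.mem_univ i)
  have hprod : 0 < α * ξm := mul_pos hα hξm
  have h2 : (x t i - s0)^2 ≤ (2 * V 0 / (α * ξm)) * Real.exp (K * t) := by
    rw [div_mul_eq_mul_div, le_div_iff₀ hprod]
    nlinarith [Real.exp_pos (K * t)]
  have habs : |x t i - s0| = Real.sqrt ((x t i - s0)^2) := (Real.sqrt_sq_eq_abs _).symm
  rw [habs]
  have h4 : Real.sqrt ((x t i - s0)^2)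
      ≤ Real.sqrt ((2 * V 0 / (α * ξm)) * Real.exp (K * t)) := Real.sqrt_le_sqrt h2
  refine h4.trans_eq ?_
  have hV00 : 0 ≤ 2 * V 0 / (α * ξm) := div_nonneg (by linarith [hV0 0]) hprod.le
  rw [Real.sqrt_mul hV00]
  congr 1
  have hexp : Real.exp (K * t) = (Real.exp (-(1 / (4 * c1)) * t))^2 := by
    rw [sq, ← Real.exp_add]
    congr 1
    rw [hKdef]
    field_simp
    ring
  rw [hexp, Real.sqrt_sq (Real.exp_nonneg _)]
end

section
/- Let L be the Laplacian of a strongly connected weighted digraph on n ≥ 2 nodes, let ξ be its normalized positive left eigenvector for eigenvalue 0, let Ξ = diag(ξ), and let B = (ΞL + LᵀΞ)/2. Then the undirected graph associated with B (with an edge between distinct i and j whenever b_ij < 0) is connected; consequently, for y ∈ ℝⁿ, yᵀ B y = 0 if and only if y is a constant vector. -/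
open Matrix BigOperators

/-- For a strongly connected weighted digraph on `n ≥ 2` nodes
with Laplacian `L`, normalized positive left eigenvector `ξ`, `Ξ = diag(ξ)` and
`B = (ΞL + LᵀΞ)/2`, the undirected graph of `B` (edge between distinct `i, j`
iff `b_ij < 0`) is connected; consequently `yᵀBy = 0` iff `y` is constant. -/
theorem symmetrized_laplacian_graph_connected
    (n : ℕ) (hn : 2 ≤ n) (A : Matrix (Fin n) (Fin n) ℝ)
    (hA : ∀ i j, 0 ≤ A i j) (hdiag : ∀ i, A i i = 0)
    (hSC : ∀ i j : Fin n, i ≠ j → Relation.TransGen (fun u v => 0 < A u v) i j)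
    (L : Matrix (Fin n) (Fin n) ℝ)
    (hL : ∀ i j, L i j = if i = j then ∑ k ∈ Finset.univ.erase i, A i k else -A i j)
    (ξ : Fin n → ℝ) (hξpos : ∀ i, 0 < ξ i) (hξsum : ∑ i, ξ i = 1)
    (hξ : ξ ᵥ* L = 0)
    (B : Matrix (Fin n) (Fin n) ℝ)
    (hB : B = ((2 : ℝ)⁻¹) • (Matrix.diagonal ξ * L + Lᵀ * Matrix.diagonal ξ)) :
    (∀ i j : Fin n, i ≠ j → Relation.TransGen (fun u v => B u v < 0) i j) ∧
    (∀ y : Fin n → ℝ, y ⬝ᵥ (B *ᵥ y) = 0 ↔ ∃ c : ℝ, ∀ i, y i = c) := by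
  -- row sums
  set r : Fin n → ℝ := fun i => ∑ k, A i k with hr
  -- cleaner form of L
  have hL' : ∀ i j, L i j = (if i = j then r i else 0) - A i j := by
    intro i j
    rw [hL]
    by_cases h : i = j
    · subst h
      rw [Finset.sum_erase_eq_sub (Finset.mem_univ i), hdiag i]
      simp [hr]
    · simp [h]
  -- entries of B
  have hBent : ∀ i j, B i j = 2⁻¹ * (ξ i * L i j + L j i * ξ j) := by
    intro i j
    rw [hB]
    simp [Matrix.add_apply, Matrix.diagonal_mul, Matrix.mul_diagonal,
      Matrix.transpose_apply]
  -- off-diagonal entries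
  have hBoff : ∀ u v, u ≠ v → B u v = -(2⁻¹ * (ξ u * A u v + ξ v * A v u)) := by
    intro u v huv
    rw [hBent, hL' u v, hL' v u, if_neg huv, if_neg (Ne.symm huv)]
    ring
  -- edge implication
  have hedgeB : ∀ u v : Fin n, 0 < A u v → B u v < 0 := by
    intro u v huv
    have hne : u ≠ v := by
      rintro rfl; rw [hdiag] at huv; exact lt_irrefl 0 huv
    rw [hBoff u v hne]
    have h1 : 0 < ξ u * A u v := mul_pos (hξpos u) huv
    have h2 : 0 ≤ ξ v * A v u := mul_nonneg (hξpos v).le (hA v u)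
    nlinarith
  -- column sum identity from the left eigenvector
  have hcol : ∀ j, ∑ i, ξ i * A i j = ξ j * r j := by
    intro j
    have h0 : (ξ ᵥ* L) j = 0 := by rw [hξ]; rfl
    have h1 : ∑ i, ξ i * L i j = 0 := by
      simpa [Matrix.vecMul, dotProduct] using h0
    have h2 : ∑ i, ξ i * ((if i = j then r i else 0) - A i j) = 0 := by
      calc ∑ i, ξ i * ((if i = j then r i else 0) - A i j)
          = ∑ i, ξ i * L i j :=
            Finset.sum_congr rfl fun i _ => by rw [hL' i j]
        _ = 0 := h1
    have h3 : ∑ i, ξ i * ((if i = j then r i else 0) - A i j)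
        = ξ j * r j - ∑ i, ξ i * A i j := by
      have step : ∀ i, ξ i * ((if i = j then r i else 0) - A i j)
          = (if i = j then ξ j * r j else 0) - ξ i * A i j := by
        intro i
        by_cases h : i = j
        · subst h; simp; ring
        · simp [h]
      rw [Finset.sum_congr rfl fun i _ => step i, Finset.sum_sub_distrib]
      congr 1
      rw [Finset.sum_eq_single j]
      · simp
      · intro i _ hij; simp [hij]
      · intro h; exact absurd (Finset.mem_univ j) h
    rw [h3] at h2
    linarith
  -- the quadratic form identity
  have hq : ∀ y : Fin n → ℝ,
      y ⬝ᵥ B *ᵥ y = 2⁻¹ * ∑ i, ∑ j, ξ i * A i j * (y i - y j) ^ 2 := by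
    intro y
    have e1 : y ⬝ᵥ B *ᵥ y = ∑ i, ∑ j, y i * B i j * y j := by
      simp [dotProduct, Matrix.mulVec, Finset.mul_sum, mul_assoc]
    -- S = ∑ᵢⱼ ξᵢ yᵢ Lᵢⱼ yⱼ
    have e2 : ∑ i, ∑ j, y i * B i j * y j
        = ∑ i, ∑ j, ξ i * y i * L i j * y j := by
      have swap : ∑ i, ∑ j, y i * (L j i * ξ j) * y j
          = ∑ i, ∑ j, ξ i * y i * L i j * y j := by
        rw [Finset.sum_comm]
        exact Finset.sum_congr rfl fun i _ =>
          Finset.sum_congr rfl fun j _ => by ring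
      calc ∑ i, ∑ j, y i * B i j * y j
          = ∑ i, ∑ j, (2⁻¹ * (y i * (ξ i * L i j) * y j)
              + 2⁻¹ * (y i * (L j i * ξ j) * y j)) := by
            exact Finset.sum_congr rfl fun i _ =>
              Finset.sum_congr rfl fun j _ => by rw [hBent]; ring
        _ = 2⁻¹ * (∑ i, ∑ j, y i * (ξ i * L i j) * y j)
              + 2⁻¹ * (∑ i, ∑ j, y i * (L j i * ξ j) * y j) := by
            simp [Finset.sum_add_distrib, Finset.mul_sum]
        _ = 2⁻¹ * (∑ i, ∑ j, ξ i * y i * L i j * y j)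
              + 2⁻¹ * (∑ i, ∑ j, ξ i * y i * L i j * y j) := by
            rw [swap]
            congr 1
            congr 1
            exact Finset.sum_congr rfl fun i _ =>
              Finset.sum_congr rfl fun j _ => by ring
        _ = ∑ i, ∑ j, ξ i * y i * L i j * y j := by ring
    -- expand L
    have e3 : ∑ i, ∑ j, ξ i * y i * L i j * y j
        = ∑ i, ξ i * y i ^ 2 * r i - ∑ i, ∑ j, ξ i * y i * A i j * y j := by
      rw [← Finset.sum_sub_distrib]
      apply Finset.sum_congr rfl
      intro i _
      have : ∑ j, ξ i * y i * L i j * y j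
          = ∑ j, (ξ i * y i * (if i = j then r i else 0) * y j
              - ξ i * y i * A i j * y j) := by
        exact Finset.sum_congr rfl fun j _ => by rw [hL']; ring
      rw [this, Finset.sum_sub_distrib]
      congr 1
      rw [Finset.sum_eq_single i]
      · simp; ring
      · intro j _ hij; simp [Ne.symm hij]
      · intro h; exact absurd (Finset.mem_univ i) h
    -- expand the RHS
    have e4 : 2⁻¹ * ∑ i, ∑ j, ξ i * A i j * (y i - y j) ^ 2
        = ∑ i, ξ i * y i ^ 2 * r i - ∑ i, ∑ j, ξ i * y i * A i j * y j := by
      have split : ∀ i j, ξ i * A i j * (y i - y j) ^ 2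
          = ξ i * A i j * y i ^ 2 + ξ i * A i j * y j ^ 2
            - 2 * (ξ i * y i * A i j * y j) := fun i j => by ring
      have t1 : ∑ i, ∑ j, ξ i * A i j * y i ^ 2 = ∑ i, ξ i * y i ^ 2 * r i := by
        apply Finset.sum_congr rfl
        intro i _
        rw [show r i = ∑ k, A i k from rfl, Finset.mul_sum]
        exact Finset.sum_congr rfl fun j _ => by ring
      have t2 : ∑ i, ∑ j, ξ i * A i j * y j ^ 2 = ∑ i, ξ i * y i ^ 2 * r i := by
        rw [Finset.sum_comm]
        apply Finset.sum_congr rfl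
        intro j _
        have : ∑ i, ξ i * A i j * y j ^ 2 = (∑ i, ξ i * A i j) * y j ^ 2 := by
          rw [Finset.sum_mul]
        rw [this, hcol j]
        ring
      calc 2⁻¹ * ∑ i, ∑ j, ξ i * A i j * (y i - y j) ^ 2
          = 2⁻¹ * ∑ i, ∑ j, (ξ i * A i j * y i ^ 2 + ξ i * A i j * y j ^ 2
              - 2 * (ξ i * y i * A i j * y j)) := by
            congr 1
            exact Finset.sum_congr rfl fun i _ =>
              Finset.sum_congr rfl fun j _ => split i j
        _ = 2⁻¹ * ((∑ i, ∑ j, ξ i * A i j * y i ^ 2)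
              + (∑ i, ∑ j, ξ i * A i j * y j ^ 2)
              - 2 * ∑ i, ∑ j, ξ i * y i * A i j * y j) := by
            simp [Finset.sum_sub_distrib, Finset.sum_add_distrib,
              Finset.mul_sum]
        _ = ∑ i, ξ i * y i ^ 2 * r i - ∑ i, ∑ j, ξ i * y i * A i j * y j := by
            rw [t1, t2]; ring
    rw [e1, e2, e3, e4]
  constructor
  · intro i j hij
    exact Relation.TransGen.mono hedgeB _ _ (hSC i j hij)
  · intro y
    constructor
    · intro h0
      rw [hq y] at h0
      have hsum : ∑ i, ∑ j, ξ i * A i j * (y i - y j) ^ 2 = 0 := by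
        linarith
      have hterm : ∀ i j : Fin n, ξ i * A i j * (y i - y j) ^ 2 = 0 := by
        have hnn : ∀ i ∈ Finset.univ, (0:ℝ) ≤ ∑ j, ξ i * A i j * (y i - y j) ^ 2 := by
          intro i _
          exact Finset.sum_nonneg fun j _ =>
            mul_nonneg (mul_nonneg (hξpos i).le (hA i j)) (sq_nonneg _)
        have hrow := (Finset.sum_eq_zero_iff_of_nonneg hnn).mp hsum
        intro i j
        have hnn2 : ∀ j ∈ Finset.univ, (0:ℝ) ≤ ξ i * A i j * (y i - y j) ^ 2 :=
          fun j _ => mul_nonneg (mul_nonneg (hξpos i).le (hA i j)) (sq_nonneg _)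
        exact (Finset.sum_eq_zero_iff_of_nonneg hnn2).mp
          (hrow i (Finset.mem_univ i)) j (Finset.mem_univ j)
      have hedge : ∀ u v : Fin n, 0 < A u v → y u = y v := by
        intro u v huv
        have h := hterm u v
        have hpos : 0 < ξ u * A u v := mul_pos (hξpos u) huv
        have hsq : (y u - y v) ^ 2 = 0 := by
          rcases mul_eq_zero.mp h with h' | h'
          · exact absurd h' (ne_of_gt hpos)
          · exact h'
        have := sq_eq_zero_iff.mp hsq
        linarith
      have i0 : Fin n := ⟨0, by omega⟩
      refine ⟨y i0, fun i => ?_⟩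
      by_cases hi : i = i0
      · rw [hi]
      · have hchain : ∀ {a b : Fin n},
            Relation.TransGen (fun u v => 0 < A u v) a b → y a = y b := by
          intro a b h
          induction h with
          | single h => exact hedge _ _ h
          | tail _ h ih => exact ih.trans (hedge _ _ h)
        exact (hchain (hSC i0 i (fun h => hi h.symm))).symm
    · rintro ⟨c, hc⟩
      rw [hq y]
      have : ∀ i j : Fin n, ξ i * A i j * (y i - y j) ^ 2 = 0 := by
        intro i j; rw [hc i, hc j]; ring
      simp [this]
end

section
/- Consider the nonlinear consensus protocol ẋ_i(t) = −∑_{j=1}^n l_ij h(x_j(t)), i = 1, …, n, on a strongly connected weighted digraph with Laplacian L, where h : ℝ → ℝ is continuous, strictly increasing, and h(0) = 0. If along a bounded solution x(t) some subsequence of times t_m → ∞ satisfies x_i(t_m) → β for every i = 1, …, n and a common limit β ∈ ℝ, then β = ∑_{i=1}^n ξ_i x_i(0), where ξ is the normalized positive left eigenvector of L for the eigenvalue 0. -/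
open Matrix BigOperators

/-- If along a bounded solution of the nonlinear protocol some
sequence of times `t_m → ∞` is such that `x_i(t_m) → β` for every `i` and a
common limit `β`, then `β = ∑ i, ξ_i x_i(0)`, where `ξ` is the normalized
positive left eigenvector of `L` for eigenvalue `0`. -/
theorem consensus_limit_is_weighted_average
    (n : ℕ) (A : Matrix (Fin n) (Fin n) ℝ)
    (hA : ∀ i j, 0 ≤ A i j) (hdiag : ∀ i, A i i = 0)
    (hSC : ∀ i j : Fin n, i ≠ j → Relation.TransGen (fun u v => 0 < A u v) i j)
    (L : Matrix (Fin n) (Fin n) ℝ)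
    (hL : ∀ i j, L i j = if i = j then ∑ k ∈ Finset.univ.erase i, A i k else -A i j)
    (ξ : Fin n → ℝ) (hξpos : ∀ i, 0 < ξ i) (hξsum : ∑ i, ξ i = 1)
    (hξ : ξ ᵥ* L = 0)
    (h : ℝ → ℝ) (hcont : Continuous h) (hmono : StrictMono h) (h0 : h 0 = 0)
    (x : ℝ → Fin n → ℝ)
    (hode : ∀ i, ∀ t ∈ Set.Ici (0 : ℝ),
      HasDerivWithinAt (fun s => x s i) (-∑ j, L i j * h (x t j)) (Set.Ici (0 : ℝ)) t)
    (hbdd : ∃ M : ℝ, ∀ t ∈ Set.Ici (0 : ℝ), ‖x t‖ ≤ M)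
    (tm : ℕ → ℝ) (htm_nonneg : ∀ m, 0 ≤ tm m)
    (htm : Filter.Tendsto tm Filter.atTop Filter.atTop)
    (β : ℝ)
    (hlim : ∀ i, Filter.Tendsto (fun m => x (tm m) i) Filter.atTop (nhds β)) :
    β = ∑ i, ξ i * x 0 i := by
  set g : ℝ → ℝ := fun t => ∑ i, ξ i * x t i with hg
  -- g has derivative 0 on Ici 0
  have hgd : ∀ t ∈ Set.Ici (0 : ℝ), HasDerivWithinAt g 0 (Set.Ici (0 : ℝ)) t := by
    intro t ht
    have hsum : HasDerivWithinAt g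
        (∑ i, ξ i * (-∑ j, L i j * h (x t j))) (Set.Ici (0 : ℝ)) t := by
      apply HasDerivWithinAt.fun_sum
      intro i _
      exact (hode i t ht).const_mul (ξ i)
    convert hsum using 1
    have hcol : ∀ j, ∑ i, ξ i * L i j = 0 := by
      intro j
      have := congrFun hξ j
      simpa [Matrix.vecMul, dotProduct] using this
    have key : ∑ i, ξ i * (-∑ j, L i j * h (x t j))
        = -∑ j, (∑ i, ξ i * L i j) * h (x t j) := by
      simp only [mul_neg, Finset.mul_sum, Finset.sum_mul, ← Finset.sum_neg_distrib]
      rw [Finset.sum_comm]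
      refine Finset.sum_congr rfl fun j _ => Finset.sum_congr rfl fun i _ => by ring
    rw [key]
    simp [hcol]
  -- g is constant on Ici 0
  have hconst : ∀ t ∈ Set.Ici (0 : ℝ), g t = g 0 := by
    intro t ht
    have hb := (convex_Ici (0:ℝ)).norm_image_sub_le_of_norm_hasDerivWithin_le
      (C := 0) hgd (fun y _ => by simp) Set.self_mem_Ici ht
    have h0' : ‖g t - g 0‖ ≤ 0 := by simpa using hb
    have := le_antisymm h0' (norm_nonneg _)
    exact sub_eq_zero.mp (norm_eq_zero.mp this)
  -- g (tm m) → β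
  have h1 : Filter.Tendsto (fun m => g (tm m)) Filter.atTop (nhds β) := by
    have : Filter.Tendsto (fun m => ∑ i, ξ i * x (tm m) i) Filter.atTop
        (nhds (∑ i : Fin n, ξ i * β)) := by
      apply tendsto_finset_sum
      intro i _
      exact (hlim i).const_mul (ξ i)
    simpa [← Finset.sum_mul, hξsum] using this
  have h2 : Filter.Tendsto (fun m => g (tm m)) Filter.atTop (nhds (g 0)) := by
    have : (fun m => g (tm m)) = fun _ => g 0 := by
      funext m; exact hconst (tm m) (htm_nonneg m)
    rw [this]; exact tendsto_const_nhds
  exact tendsto_nhds_unique h1 h2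
end
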